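/- arXiv:2203.07787 — 6 statements merged into one kernel-verified Lean document; each statement's English description precedes it below -/
import Mathlib

section
/- Let χ be a character of K^×. The following are equivalent: (i) χ(s(x)) = χ(x) for all x ∈ K^×; (ii) χ(s(x)·x^{-1}) = 1 for all x ∈ K^×; (iii) χ factors through the norm, i.e. there exists a character θ of F^× such that χ(x) = θ(Nm_{K|F}(x)) for all x ∈ K^×. -/
noncomputable instance : RootableBy ℂˣ ℕ :=
  rootableByOfPowLeftSurj _ _ (fun {n} hn z => by
    refine ⟨Units.mk0 (Complex.exp (Complex.log z / n)) (Complex.exp_ne_zero _), ?_⟩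
    ext
    push_cast
    rw [Units.val_mk0, ← Complex.exp_nat_mul, mul_div_cancel₀ _ (by exact_mod_cast hn),
      Complex.exp_log z.ne_zero])

noncomputable instance : RootableBy ℂˣ ℤ := Group.rootableByIntOfRootableByNat ℂˣ

noncomputable instance : DivisibleBy (Additive ℂˣ) ℤ where
  div a n := Additive.ofMul (RootableBy.root a.toMul n)
  div_zero a := congrArg Additive.ofMul (RootableBy.root_zero _)
  div_cancel {n} a hn := congrArg Additive.ofMul (RootableBy.root_cancel (α := ℤ) a.toMul hn)

open CategoryTheory in
lemma exists_char_extension {G : Type u} [CommGroup G] (H : Subgroup G) (f : H →* ℂˣ) :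
    ∃ g : G →* ℂˣ, ∀ h : H, g h = f h := by
  let A : AddCommGrpCat.{u} := AddCommGrpCat.of (Additive G)
  let B : AddCommGrpCat.{u} := AddCommGrpCat.of (Additive H)
  let C : AddCommGrpCat.{u} := AddCommGrpCat.of (ULift.{u} (Additive ℂˣ))
  let e : ULift.{u} (Additive ℂˣ) ≃+ Additive ℂˣ := AddEquiv.ulift
  haveI : Injective C := AddCommGrpCat.injective_of_divisible _
  let i : B ⟶ A := AddCommGrpCat.ofHom (MonoidHom.toAdditive H.subtype)
  haveI : Mono i := (AddCommGrpCat.mono_iff_injective i).mpr (fun a b hab => Subtype.ext hab)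
  let f' : B ⟶ C := AddCommGrpCat.ofHom (e.symm.toAddMonoidHom.comp (MonoidHom.toAdditive f))
  let g' : A ⟶ C := Injective.factorThru f' i
  refine ⟨MonoidHom.toAdditive.symm (e.toAddMonoidHom.comp g'.hom), fun h => ?_⟩
  have h1 : g' (i (Additive.ofMul h)) = f' (Additive.ofMul h) :=
    congrFun (congrArg (fun (φ : B ⟶ C) => (φ : Additive H → ULift (Additive ℂˣ)))
      (Injective.comp_factorThru f' i)) (Additive.ofMul h)
  have h3 : f' (Additive.ofMul h) = e.symm (Additive.ofMul (f h)) := rfl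
  show Additive.toMul (e (g' (i (Additive.ofMul h)))) = f h
  rw [h1, h3, e.apply_symm_apply]
  rfl


open groupCohomology

/-- Let `F ⊆ K` be a Galois extension of fields of degree 2, let `s` be the
nontrivial element of `Gal(K|F)`, and let `ν : Kˣ →* Fˣ` be the norm map (characterized by
`ν x = x · s x`).  For a character `χ : Kˣ →* ℂˣ`, the following are equivalent:
(i) `χ ∘ s = χ`; (ii) `χ(s(x)·x⁻¹) = 1` for all `x`; (iii) `χ` factors through the norm. -/
theorem stmt_0 {F K : Type*} [Field F] [Field K] [Algebra F K] [IsGalois F K]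
    (h2 : Module.finrank F K = 2)
    (s : K ≃ₐ[F] K) (hs : s ≠ AlgEquiv.refl)
    (ν : Kˣ →* Fˣ)
    (hν : ∀ x : Kˣ, (algebraMap F K (ν x) : K) = (x : K) * s (x : K))
    (χ : Kˣ →* ℂˣ) :
    List.TFAE
      [ (∀ x : Kˣ, χ (Units.map (s : K →* K) x) = χ x),
        (∀ x : Kˣ, χ (Units.map (s : K →* K) x * x⁻¹) = 1),
        (∃ θ : Fˣ →* ℂˣ, ∀ x : Kˣ, χ x = θ (ν x)) ] := by
  classical
  haveI : FiniteDimensional F K := FiniteDimensional.of_finrank_eq_succ h2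
  have hs1 : s ≠ 1 := hs
  have hcard : Nat.card (K ≃ₐ[F] K) = 2 := by
    rw [IsGalois.card_aut_eq_finrank, h2]
  have huniv : ∀ g : K ≃ₐ[F] K, g ≠ 1 → g = s := by
    obtain ⟨y, -, hy⟩ := (Nat.card_eq_two_iff' (1 : K ≃ₐ[F] K)).mp hcard
    intro g hg
    rw [hy g hg, hy s hs1]
  have hss : s * s = 1 := by
    by_contra hne
    have := huniv (s * s) hne
    have : s = 1 := mul_left_cancel (a := s) (by rw [this, mul_one])
    exact hs1 this
  have hsinv : ∀ x : K, s (s x) = x := fun x => by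
    conv_rhs => rw [← AlgEquiv.one_apply (R := F) x, ← hss]
    rfl
  have hinj : Function.Injective (algebraMap F K) := (algebraMap F K).injective
  have hνs : ∀ x : Kˣ, ν (Units.map (s : K →* K) x) = ν x := by
    intro x
    have h1 := hν (Units.map (s : K →* K) x)
    have h2' := hν x
    refine Units.ext (hinj ?_)
    rw [h1, h2']
    simp only [Units.coe_map, MonoidHom.coe_coe]
    rw [hsinv, mul_comm]
  have hkern : ∀ z : Kˣ, ν z = 1 →
      (∀ x : Kˣ, χ (Units.map (s : K →* K) x) = χ x) → χ z = 1 := by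
    intro z hz h1
    have hzval : (z : K) * s (z : K) = 1 := by
      rw [← hν z, hz]; simp
    set f : (K ≃ₐ[F] K) → Kˣ := fun g => if g = 1 then 1 else z with hf_def
    have hf : IsMulCocycle₁ f := by
      intro g h
      by_cases hg : g = 1
      · subst hg; simp [hf_def, one_smul]
      · by_cases hh : h = 1
        · subst hh
          simp only [hf_def, mul_one, if_neg hg, AlgEquiv.smul_units_def, if_pos rfl, map_one,
            one_mul]
        · rw [huniv g hg, huniv h hh]
          simp only [hf_def, hss, if_pos rfl, if_neg hs1, AlgEquiv.smul_units_def]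
          refine (Units.ext ?_).symm
          simp only [Units.val_mul, Units.coe_map, MonoidHom.coe_coe, Units.val_one]
          rw [mul_comm, hzval]
      -- done
    obtain ⟨β, hβ⟩ := isMulCoboundary₁_of_isMulCocycle₁_of_aut_to_units f hf
    have hβs := hβ s
    rw [hf_def] at hβs
    simp only [if_neg hs1, AlgEquiv.smul_units_def] at hβs
    rw [← hβs, div_eq_mul_inv, map_mul, map_inv, h1, mul_inv_cancel]
  tfae_have 1 → 2 := by
    intro h1 x
    rw [map_mul, map_inv, h1, mul_inv_cancel]
  tfae_have 2 → 1 := by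
    intro h' x
    have := h' x
    rw [map_mul, map_inv, mul_inv_eq_one] at this
    exact this
  tfae_have 3 → 1 := by
    rintro ⟨θ, hθ⟩ x
    rw [hθ, hθ, hνs]
  tfae_have 1 → 3 := by
    intro h1
    have W : ∀ x y : Kˣ, ν x = ν y → χ x = χ y := by
      intro x y hxy
      have hz : ν (x * y⁻¹) = 1 := by
        rw [map_mul, map_inv, hxy, mul_inv_cancel]
      have := hkern (x * y⁻¹) hz h1
      rwa [map_mul, map_inv, mul_inv_eq_one] at this
    have pick : ∀ a : ν.range, ν (MonoidHom.mem_range.mp a.2).choose = (a : Fˣ) :=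
      fun a => (MonoidHom.mem_range.mp a.2).choose_spec
    let θ₀ : ν.range →* ℂˣ :=
      { toFun := fun a => χ (MonoidHom.mem_range.mp a.2).choose
        map_one' := by
          rw [W _ 1 (by rw [pick 1, map_one]; rfl), map_one]
        map_mul' := by
          intro a b
          rw [W _ ((MonoidHom.mem_range.mp a.2).choose * (MonoidHom.mem_range.mp b.2).choose)
            (by rw [map_mul, pick, pick, pick]; rfl), map_mul] }
    obtain ⟨θ, hθ⟩ := exists_char_extension ν.range θ₀
    refine ⟨θ, fun x => ?_⟩
    have hmem : ν x ∈ ν.range := ⟨x, rfl⟩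
    rw [show ν x = ((⟨ν x, hmem⟩ : ν.range) : Fˣ) from rfl, hθ]
    exact (W _ x (pick ⟨ν x, hmem⟩)).symm
  tfae_finish
end

section
/- Suppose χ(x) = 1 for every x ∈ F^× that is a unit of B. Then χ factors through the norm (i.e. there exists a character θ of F^× with χ = θ ∘ Nm_{K|F}) if and only if χ(s(π)·π^{-1}) = 1 and χ(u)² = 1 for every unit u of B. -/
noncomputable instance inst_s2 : RootableBy ℂˣ ℕ where
  root a n := if h : n = 0 then 1 else
    Units.mk0 ((a : ℂ) ^ ((n : ℂ)⁻¹)) (by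
      simp [Complex.cpow_eq_zero_iff, a.ne_zero])
  root_zero a := by simp
  root_cancel {n} a hn := by
    show (if h : n = 0 then 1 else Units.mk0 ((a : ℂ) ^ ((n : ℂ)⁻¹)) _) ^ n = a
    rw [dif_neg hn]
    ext
    push_cast
    exact Complex.cpow_nat_inv_pow _ hn

noncomputable instance inst_s2_2 : DivisibleBy (Additive ℂˣ) ℤ where
  div a z := Additive.ofMul (RootableBy.root a.toMul z)
  div_zero a := congrArg Additive.ofMul (RootableBy.root_zero a.toMul)
  div_cancel {n} a hn := congrArg Additive.ofMul (RootableBy.root_cancel a.toMul hn)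

lemma extend_char {G : Type*} [CommGroup G] (H : Subgroup G) (f : H →* ℂˣ) :
    ∃ g : G →* ℂˣ, ∀ h : H, g h = f h := by
  obtain ⟨g', hg'⟩ := (Module.Baer.of_divisible (Additive ℂˣ)).extension_property_addMonoidHom
    (MonoidHom.toAdditive H.subtype)
    (fun a b hab => Subtype.ext (by exact congrArg Additive.toMul hab))
    (MonoidHom.toAdditive f)
  refine ⟨MonoidHom.toAdditive.symm g', fun h => ?_⟩
  have := DFunLike.congr_fun hg' (Additive.ofMul h)
  exact this

/-- `F ⊆ K` Galois of degree 2 with nontrivial automorphism `s`,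
`ν : Kˣ →* Fˣ` the norm map (`ν x = x · s x`), `B` a discrete valuation ring with fraction
field `K` stable under `s`, and `π` a uniformizer of `B` (generator of the maximal ideal).
If the character `χ : Kˣ →* ℂˣ` is trivial on every element of `F^×` that is a unit of `B`,
then `χ` factors through the norm iff `χ(s(π)·π⁻¹) = 1` and `χ(u)² = 1` for every unit
`u` of `B`. -/
theorem stmt_2 {F K B : Type*} [Field F] [Field K] [Algebra F K] [IsGalois F K]
    (h2 : Module.finrank F K = 2)
    (s : K ≃ₐ[F] K) (hs : s ≠ AlgEquiv.refl)
    (ν : Kˣ →* Fˣ)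
    (hν : ∀ x : Kˣ, (algebraMap F K (ν x) : K) = (x : K) * s (x : K))
    [CommRing B] [IsDomain B] [IsDiscreteValuationRing B]
    [Algebra B K] [IsFractionRing B K]
    (hsB : ∀ b : B, ∃ b' : B, s (algebraMap B K b) = algebraMap B K b')
    (π : B) (hπ : Ideal.span {π} = IsLocalRing.maximalIdeal B)
    (χ : Kˣ →* ℂˣ)
    (hχF : ∀ (x : Fˣ) (b : Bˣ), algebraMap B K (b : B) = algebraMap F K (x : F) →
      ∀ y : Kˣ, (y : K) = algebraMap F K (x : F) → χ y = 1) :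
    (∃ θ : Fˣ →* ℂˣ, ∀ x : Kˣ, χ x = θ (ν x)) ↔
      ((∀ y : Kˣ, (y : K) * algebraMap B K π = s (algebraMap B K π) → χ y = 1) ∧
        (∀ u : Bˣ, ∀ y : Kˣ, (y : K) = algebraMap B K (u : B) → (χ y) ^ 2 = 1)) := by
  classical
  have ja : Function.Injective (algebraMap B K) := IsFractionRing.injective B K
  have jf : Function.Injective (algebraMap F K) := (algebraMap F K).injective
  haveI : FiniteDimensional F K := Module.finite_of_finrank_pos (by rw [h2]; norm_num)
  -- s is an involution
  have hss : ∀ x : K, s (s x) = x := by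
    have hcard : Fintype.card (K ≃ₐ[F] K) = 2 := by
      rw [Fintype.card_eq_nat_card, IsGalois.card_aut_eq_finrank, h2]
    have h1 : s ^ 2 = 1 := by rw [← hcard]; exact pow_card_eq_one
    intro x
    have := congrArg (fun e : K ≃ₐ[F] K => e x) h1
    simpa [pow_two, AlgEquiv.mul_apply] using this
  set S : Kˣ →* Kˣ := Units.map (s : K →* K) with hSdef
  have hS : ∀ x : Kˣ, ((S x : Kˣ) : K) = s (x : K) := fun x => rfl
  set um : Bˣ →* Kˣ := Units.map (algebraMap B K : B →* K) with humdef
  have hum : ∀ u : Bˣ, ((um u : Kˣ) : K) = algebraMap B K (u : B) := fun u => rfl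
  -- s maps B-units to B-units
  have hsu : ∀ u : Bˣ, ∃ u' : Bˣ, S (um u) = um u' := by
    intro u
    obtain ⟨b', hb'⟩ := hsB (u : B)
    obtain ⟨b'', hb''⟩ := hsB ((u⁻¹ : Bˣ) : B)
    have h1 : b' * b'' = 1 := by
      apply ja
      rw [map_mul, map_one, ← hb', ← hb'', ← map_mul, ← map_mul, Units.mul_inv, map_one,
        map_one]
    refine ⟨⟨b', b'', h1, by rw [mul_comm]; exact h1⟩, Units.ext ?_⟩
    exact hb'
  -- the norm of a B-unit is trivial under χ
  have hA : ∀ u : Bˣ, χ (um u) * χ (S (um u)) = 1 := by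
    intro u
    obtain ⟨u', hu'⟩ := hsu u
    have hu'c : s (algebraMap B K (u : B)) = algebraMap B K (u' : B) := by
      have := congrArg (Units.val) hu'
      rw [hS, hum] at this
      exact this
    rw [← map_mul]
    refine hχF (ν (um u)) (u * u') ?_ _ ?_
    · rw [hν (um u), Units.val_mul, map_mul, hum, hu'c]
    · rw [hν (um u), Units.val_mul, hS]
  -- the uniformizer as a unit of K
  have hπ0 : π ≠ 0 := by
    intro h
    apply IsDiscreteValuationRing.not_a_field B
    rw [← hπ, h, Ideal.span_singleton_eq_bot]
  have hπK : algebraMap B K π ≠ 0 := fun h => hπ0 (ja (by rw [h, map_zero]))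
  set P : Kˣ := Units.mk0 _ hπK with hPdef
  have hPc : (P : K) = algebraMap B K π := rfl
  have hirr : Irreducible π := (IsDiscreteValuationRing.irreducible_iff_uniformizer π).mpr hπ.symm
  -- decomposition of units of K
  have hdec : ∀ x : Kˣ, ∃ (u : Bˣ) (n : ℤ), x = um u * P ^ n := by
    intro x
    obtain ⟨a, b, hb, hab⟩ := IsFractionRing.div_surjective (A := B) (x : K)
    have hb0 : b ≠ 0 := nonZeroDivisors.ne_zero hb
    have hbK : algebraMap B K b ≠ 0 := fun h => hb0 (ja (by rw [h, map_zero]))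
    have ha0 : a ≠ 0 := by
      intro h
      apply x.ne_zero
      rw [← hab, h, map_zero, zero_div]
    obtain ⟨m, u1, hu1⟩ := IsDiscreteValuationRing.eq_unit_mul_pow_irreducible ha0 hirr
    obtain ⟨n, u2, hu2⟩ := IsDiscreteValuationRing.eq_unit_mul_pow_irreducible hb0 hirr
    have hu2K : algebraMap B K ((u2⁻¹ : Bˣ) : B) = (algebraMap B K (u2 : B))⁻¹ := by
      apply eq_inv_of_mul_eq_one_left
      rw [← map_mul, Units.inv_mul, map_one]
    have hu2K0 : algebraMap B K (u2 : B) ≠ 0 :=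
      fun h => u2.ne_zero (ja (by rw [h, map_zero]))
    refine ⟨u1 * u2⁻¹, (m : ℤ) - n, Units.ext ?_⟩
    rw [Units.val_mul, hum, Units.val_zpow_eq_zpow_val, hPc, ← hab, hu1, hu2,
      map_mul, map_mul, map_pow, map_pow, Units.val_mul, map_mul, hu2K,
      zpow_sub₀ hπK, zpow_natCast, zpow_natCast]
    field_simp
  constructor
  · rintro ⟨θ, hθ⟩
    have hνS : ∀ x : Kˣ, ν (S x) = ν x := by
      intro x
      apply Units.ext
      apply jf
      rw [hν (S x), hν x, hS, hss]
      ring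
    constructor
    · intro y hy
      have hsπ0 : s (algebraMap B K π) ≠ 0 :=
        fun h => hπK (s.injective (by rw [h, map_zero]))
      have h1 : (y : K) = s (algebraMap B K π) / algebraMap B K π :=
        (eq_div_iff hπK).mpr hy
      have hνy : ν y = 1 := by
        apply Units.ext
        apply jf
        rw [hν y, Units.val_one, map_one, h1, map_div₀, hss]
        field_simp
      rw [hθ, hνy, map_one]
    · intro u y hy
      have hy' : y = um u := Units.ext hy
      have hSy : χ (S (um u)) = χ (um u) := by rw [hθ, hθ, hνS]
      calc (χ y) ^ 2 = χ (um u) * χ (S (um u)) := by rw [hy', pow_two, hSy]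
        _ = 1 := hA u
  · rintro ⟨hc1, hc2⟩
    have hP1 : χ (S P) = χ P := by
      have h0 : χ (S P * P⁻¹) = 1 := by
        apply hc1
        rw [Units.val_mul, hS, hPc]
        have : ((P⁻¹ : Kˣ) : K) = (algebraMap B K π)⁻¹ := by
          rw [← hPc]; exact (Units.val_inv_eq_inv_val P)
        rw [this]
        field_simp
      rw [map_mul, map_inv] at h0
      exact mul_inv_eq_one.mp h0
    have hU : ∀ u : Bˣ, χ (um u) ^ 2 = 1 := fun u => hc2 u (um u) (hum u)
    have hkerχ : ∀ z : Kˣ, ν z = 1 → χ z = 1 := by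
      intro z hz
      have hz' : (z : K) * s (z : K) = 1 := by
        rw [← hν z, hz, Units.val_one, map_one]
      have hc : ∃ c : K, c + (z : K) * s c ≠ 0 := by
        by_contra hcon
        push_neg at hcon
        have h1 := hcon 1
        rw [map_one, mul_one] at h1
        have hz1 : (z : K) = -1 := by linear_combination h1
        apply hs
        apply AlgEquiv.ext
        intro c
        have h2 := hcon c
        rw [hz1] at h2
        show s c = c
        linear_combination -h2
      obtain ⟨c, hc⟩ := hc
      set w := c + (z : K) * s c with hw
      have hzw : (z : K) * s w = w := by
        rw [hw, map_add, map_mul, hss]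
        linear_combination c * hz'
      have hsw : s w ≠ 0 := fun h => hc (s.injective (by rw [h, map_zero]))
      have hzWcoe : (z : K) = w * (s w)⁻¹ := by
        rw [← div_eq_mul_inv, eq_div_iff hsw]
        exact hzw
      have hzunit : z = Units.mk0 w hc * (S (Units.mk0 w hc))⁻¹ := by
        apply Units.ext
        rw [Units.val_mul, Units.val_inv_eq_inv_val, hS]
        exact hzWcoe
      obtain ⟨u, n, hWd⟩ := hdec (Units.mk0 w hc)
      have hSneg : χ (S (um u)) = (χ (um u))⁻¹ :=
        eq_inv_of_mul_eq_one_left (by rw [mul_comm]; exact hA u)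
      rw [hzunit, map_mul, map_inv, hWd, map_mul, map_mul, map_zpow, map_mul, map_zpow,
        map_zpow, hP1, hSneg]
      have hgoal : χ (um u) * χ P ^ n * ((χ (um u))⁻¹ * χ P ^ n)⁻¹ = χ (um u) ^ 2 := by
        rw [mul_inv, inv_inv, mul_mul_mul_comm, mul_inv_cancel, mul_one, pow_two]
      rw [hgoal, hU u]
    have hker' : ν.rangeRestrict.ker ≤ χ.ker := by
      intro x hx
      rw [MonoidHom.ker_rangeRestrict] at hx
      exact hkerχ x hx
    have hsurj := ν.rangeRestrict_surjective
    obtain ⟨θ, hθ⟩ := extend_char ν.range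
      (ν.rangeRestrict.liftOfRightInverse (Function.surjInv hsurj)
        (Function.rightInverse_surjInv hsurj) ⟨χ, hker'⟩)
    refine ⟨θ, fun x => ?_⟩
    have h1 := ν.rangeRestrict.liftOfRightInverse_comp_apply (Function.surjInv hsurj)
      (Function.rightInverse_surjInv hsurj) ⟨χ, hker'⟩ x
    rw [← h1, ← hθ (ν.rangeRestrict x)]
    rfl
end

section
/- For every integer k ≥ 1, the set U_k := { N(x) mod 3^{⌈k/2⌉} : x ∈ ℤ[√3] whose class modulo (√3)^k is a unit } is a subgroup of (ℤ/3^{⌈k/2⌉}ℤ)^×; it is cyclic of order 3^{⌊(k−1)/2⌋}, generated by the class of 4. -/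
lemma aux_lte (j : ℕ) :
    emultiplicity (3:ℤ) (4 ^ (3 ^ j) - 1) = (j + 1 : ℕ) := by
  have h := Int.emultiplicity_pow_sub_pow (p := 3) Nat.prime_three (by decide)
      (x := 4) (y := 1) (by norm_num) (by norm_num) (3 ^ j)
  simp only [one_pow] at h
  have h1 : emultiplicity ((3:ℕ):ℤ) ((4:ℤ) - 1) = (1:ℕ) := by
    rw [emultiplicity_eq_coe]
    norm_num
  have h2 : emultiplicity 3 (3 ^ j) = (j:ℕ) :=
    emultiplicity_pow_self_of_prime Nat.prime_three.prime j
  rw [h1, h2] at h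
  rw [show ((3:ℕ):ℤ) = (3:ℤ) by norm_num] at h
  rw [h]
  push_cast
  exact add_comm _ _

lemma aux_dvd (j : ℕ) : (3:ℤ) ^ (j+1) ∣ 4 ^ (3 ^ j) - 1 :=
  ((emultiplicity_eq_coe).mp (aux_lte j)).1

lemma aux_ndvd (j : ℕ) : ¬ (3:ℤ) ^ (j+2) ∣ 4 ^ (3 ^ j) - 1 :=
  ((emultiplicity_eq_coe).mp (aux_lte j)).2

lemma cast_pow_eq_one_iff (N t : ℕ) : (4 : ZMod N) ^ t = 1 ↔ (N:ℤ) ∣ 4 ^ t - 1 := by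
  rw [← ZMod.intCast_zmod_eq_zero_iff_dvd]
  push_cast
  rw [sub_eq_zero]

lemma aux_ord (m : ℕ) (hm : 1 ≤ m) : orderOf (4 : ZMod (3^m)) = 3 ^ (m-1) := by
  have h1 : (4 : ZMod (3^m)) ^ (3 ^ (m-1)) = 1 := by
    rw [cast_pow_eq_one_iff]
    have := aux_dvd (m-1)
    rw [show m - 1 + 1 = m by omega] at this
    exact_mod_cast this
  have hd : orderOf (4 : ZMod (3^m)) ∣ 3 ^ (m-1) := orderOf_dvd_of_pow_eq_one h1
  obtain ⟨i, hi, hio⟩ := (Nat.dvd_prime_pow Nat.prime_three).mp hd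
  rw [hio]
  congr 1
  by_contra hne
  have hilt : i ≤ m - 2 := by omega
  have hm2 : 2 ≤ m := by
    rcases Nat.lt_or_ge m 2 with h | h
    · interval_cases m <;> omega
    · exact h
  have : (4 : ZMod (3^m)) ^ (3 ^ (m-2)) = 1 := by
    apply orderOf_dvd_iff_pow_eq_one.mp
    rw [hio]
    exact pow_dvd_pow 3 hilt
  rw [cast_pow_eq_one_iff] at this
  apply aux_ndvd (m-2)
  rw [show m - 2 + 2 = m by omega]
  exact_mod_cast this

lemma aux_norm_mod_three (k : ℕ) (hk : 1 ≤ k) (x : Zsqrtd 3)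
    (hx : IsUnit (Ideal.Quotient.mk (Ideal.span {(Zsqrtd.sqrtd : Zsqrtd 3) ^ k}) x)) :
    ((Zsqrtd.norm x : ℤ) : ZMod 3) = 1 := by
  obtain ⟨b, hb⟩ := hx.exists_right_inv
  obtain ⟨y, rfl⟩ := Ideal.Quotient.mk_surjective b
  rw [← map_mul, show (1 : (Zsqrtd 3) ⧸ (Ideal.span {(Zsqrtd.sqrtd : Zsqrtd 3) ^ k})) =
    Ideal.Quotient.mk _ 1 from (map_one _).symm, Ideal.Quotient.eq] at hb
  obtain ⟨z, hz⟩ := Ideal.mem_span_singleton.mp hb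
  rw [show k = 1 + (k - 1) by omega, pow_add, pow_one, mul_assoc] at hz
  have hre := congrArg Zsqrtd.re hz
  simp only [Zsqrtd.re_sub, Zsqrtd.re_mul, Zsqrtd.re_one, Zsqrtd.re_sqrtd, Zsqrtd.im_sqrtd] at hre
  have hcast := congrArg (fun t : ℤ => (t : ZMod 3)) hre
  push_cast at hcast
  have h3 : ((3:ℤ) : ZMod 3) = 0 := by decide
  have key : (x.re : ZMod 3) * (y.re : ZMod 3) = 1 := by
    rw [← sub_eq_zero]
    linear_combination hcast - (x.im * y.im - ((Zsqrtd.sqrtd ^ (k-1) * z : Zsqrtd 3).im)) * h3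
  have sq : ∀ a c : ZMod 3, a * c = 1 → a * a = 1 := by decide
  rw [Zsqrtd.norm_def]
  push_cast
  linear_combination sq _ _ key - (x.im * x.im : ZMod 3) * h3

open Subgroup in
lemma aux_zpowers_eq_ker (m : ℕ) (hm : 1 ≤ m) (g : (ZMod (3^m))ˣ)
    (hg : (g : ZMod (3^m)) = 4) (hord : orderOf (4 : ZMod (3^m)) = 3 ^ (m-1)) :
    Subgroup.zpowers g =
      (Units.map (ZMod.castHom (dvd_pow_self 3 (by omega : m ≠ 0)) (ZMod 3)).toMonoidHom).ker := by
  haveI : NeZero (3^m) := ⟨by positivity⟩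
  set f := Units.map (ZMod.castHom (dvd_pow_self 3 (by omega : m ≠ 0)) (ZMod 3)).toMonoidHom with hf
  have hsurj : Function.Surjective f := by
    intro u
    have hcases : ∀ u : (ZMod 3)ˣ, u = 1 ∨ u = -1 := by decide
    rcases hcases u with rfl | rfl
    · exact ⟨1, map_one f⟩
    · refine ⟨-1, ?_⟩
      ext
      simp [hf]
  have hcardG : Nat.card (ZMod (3^m))ˣ = 2 * 3 ^ (m-1) := by
    rw [Nat.card_eq_fintype_card, ZMod.card_units_eq_totient,
      Nat.totient_prime_pow Nat.prime_three (by omega)]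
    omega
  have hq : Nat.card ((ZMod (3^m))ˣ ⧸ f.ker) = 2 := by
    rw [Nat.card_congr (QuotientGroup.quotientKerEquivOfSurjective f hsurj).toEquiv,
      Nat.card_eq_fintype_card]
    decide
  have hcards := Subgroup.card_eq_card_quotient_mul_card_subgroup f.ker
  rw [hq, hcardG] at hcards
  have hker : Nat.card f.ker = 3 ^ (m-1) := by omega
  have hle : Subgroup.zpowers g ≤ f.ker := by
    rw [Subgroup.zpowers_le, MonoidHom.mem_ker]
    ext
    rw [hf]
    simp only [Units.coe_map, RingHom.toMonoidHom_eq_coe, MonoidHom.coe_coe, hg,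
      ZMod.castHom_apply]
    rw [show (4 : ZMod (3^m)) = ((4:ℕ) : ZMod (3^m)) by norm_cast,
      ZMod.cast_natCast (dvd_pow_self 3 (by omega : m ≠ 0))]
    decide
  refine Subgroup.eq_of_le_of_card_ge hle ?_
  rw [hker, Nat.card_zpowers, ← orderOf_units, hg, hord]

/-- For every `k ≥ 1`, the set
`U_k = { N(x) mod 3^⌈k/2⌉ : x ∈ ℤ[√3], x a unit mod (√3)^k }` is a subgroup of
`(ℤ/3^⌈k/2⌉ℤ)ˣ`, cyclic of order `3^⌊(k-1)/2⌋` and generated by the class of `4`.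
(Here `⌈k/2⌉ = (k+1)/2` and `⌊(k-1)/2⌋ = (k-1)/2` in natural-number division.) -/
theorem stmt_6 (k : ℕ) (hk : 1 ≤ k) :
    ∃ U : Subgroup (ZMod (3 ^ ((k + 1) / 2)))ˣ,
      (∀ v : (ZMod (3 ^ ((k + 1) / 2)))ˣ,
        v ∈ U ↔ ∃ x : Zsqrtd 3,
          IsUnit (Ideal.Quotient.mk (Ideal.span {(Zsqrtd.sqrtd : Zsqrtd 3) ^ k}) x) ∧
          (Zsqrtd.norm x : ZMod (3 ^ ((k + 1) / 2))) = (v : ZMod (3 ^ ((k + 1) / 2)))) ∧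
      Nat.card U = 3 ^ ((k - 1) / 2) ∧
      (∃ g : (ZMod (3 ^ ((k + 1) / 2)))ˣ, (g : ZMod (3 ^ ((k + 1) / 2))) = 4 ∧
        Subgroup.zpowers g = U) := by
  set m := (k + 1) / 2 with hmdef
  have hm : 1 ≤ m := by omega
  have hcop : Nat.Coprime 4 (3 ^ m) := Nat.Coprime.pow_right m (by decide)
  set g : (ZMod (3 ^ m))ˣ := ZMod.unitOfCoprime 4 hcop with hgdef
  have hg : (g : ZMod (3 ^ m)) = 4 := by
    rw [hgdef, ZMod.coe_unitOfCoprime]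
    norm_cast
  have hord := aux_ord m hm
  have hker := aux_zpowers_eq_ker m hm g hg hord
  set I : Ideal (Zsqrtd 3) := Ideal.span {(Zsqrtd.sqrtd : Zsqrtd 3) ^ k} with hI
  refine ⟨Subgroup.zpowers g, ?_, ?_, g, hg, rfl⟩
  · intro v
    constructor
    · intro hv
      obtain ⟨n, rfl⟩ := (Submonoid.mem_powers_iff _ _).mp (mem_powers_iff_mem_zpowers.mpr hv)
      refine ⟨(⟨4, 2⟩ : Zsqrtd 3) ^ n, ?_, ?_⟩
      · rw [map_pow]
        refine IsUnit.pow n ?_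
        have hfact : (⟨4, 2⟩ : Zsqrtd 3) = 2 * ⟨2, 1⟩ := by
          ext <;> simp [Zsqrtd.re_mul, Zsqrtd.im_mul]
        rw [hfact, map_mul]
        refine IsUnit.mul ?_ ?_
        · -- 2 is a unit mod I since 3^m ∈ I and gcd(2, 3^m) = 1
          obtain ⟨t, ht⟩ : Odd (3 ^ m) := Odd.pow (by decide)
          have h3m : Ideal.Quotient.mk I ((3 : Zsqrtd 3) ^ m) = 0 := by
            rw [Ideal.Quotient.eq_zero_iff_mem, hI, Ideal.mem_span_singleton]
            have : (3 : Zsqrtd 3) = Zsqrtd.sqrtd * Zsqrtd.sqrtd := by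
              rw [Zsqrtd.dmuld]
              norm_cast
            rw [this, ← sq, ← pow_mul]
            exact pow_dvd_pow _ (by omega)
          refine IsUnit.of_mul_eq_one (Ideal.Quotient.mk I ((t + 1 : ℕ) : Zsqrtd 3)) ?_
          have hnat : 2 * (t + 1) = 3 ^ m + 1 := by omega
          have hzs := congrArg (fun n : ℕ => (n : Zsqrtd 3)) hnat
          push_cast at hzs
          rw [← map_mul, show ((2 : Zsqrtd 3)) * ((t + 1 : ℕ) : Zsqrtd 3)
              = (3 : Zsqrtd 3) ^ m + 1 by push_cast; exact_mod_cast hzs,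
            map_add, h3m, map_one, zero_add]
        · refine IsUnit.of_mul_eq_one (Ideal.Quotient.mk I ⟨2, -1⟩) ?_
          rw [← map_mul, show ((⟨2, 1⟩ : Zsqrtd 3) * ⟨2, -1⟩) = 1 by
            ext <;> simp [Zsqrtd.re_mul, Zsqrtd.im_mul], map_one]
      · have hn4 : Zsqrtd.norm ((⟨4, 2⟩ : Zsqrtd 3) ^ n) = 4 ^ n := by
          rw [show Zsqrtd.norm ((⟨4, 2⟩ : Zsqrtd 3) ^ n)
              = Zsqrtd.normMonoidHom ((⟨4, 2⟩ : Zsqrtd 3) ^ n) from rfl, map_pow]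
          norm_num [Zsqrtd.normMonoidHom, Zsqrtd.norm_def]
        rw [hn4]
        push_cast [Units.val_pow_eq_pow_val, hg]
        ring
    · rintro ⟨x, hx, hnorm⟩
      rw [hker, MonoidHom.mem_ker]
      ext
      simp only [Units.coe_map, RingHom.toMonoidHom_eq_coe, MonoidHom.coe_coe,
        ZMod.castHom_apply, Units.val_one]
      rw [← hnorm, ZMod.cast_intCast (dvd_pow_self 3 (by omega : m ≠ 0))]
      exact aux_norm_mod_three k hk x hx
  · rw [Nat.card_zpowers, ← orderOf_units, hg, hord]
    congr 1
    omega
end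

section
/- For every integer k ≥ 1, let U_k ≤ (ℤ/3^{⌈k/2⌉}ℤ)^× be the subgroup { N(x) mod 3^{⌈k/2⌉} : x ∈ ℤ[√3] whose class modulo (√3)^k is a unit }. Then the quotient group (ℤ/3^{⌈k/2⌉}ℤ)^× / U_k has order 2 and is generated by the class of −1; in particular, −1 mod 3^{⌈k/2⌉} does not lie in U_k. -/
set_option maxHeartbeats 1000000 in
set_option synthInstance.maxHeartbeats 200000 in
theorem stmt7_aux (k m : ℕ) (hk : 1 ≤ k) (hm1 : 1 ≤ m)
    (U : Subgroup (ZMod (3 ^ m))ˣ)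
    (hU : ∀ v : (ZMod (3 ^ m))ˣ,
      v ∈ U ↔ ∃ x : Zsqrtd 3,
        IsUnit (Ideal.Quotient.mk (Ideal.span {(Zsqrtd.sqrtd : Zsqrtd 3) ^ k}) x) ∧
        (Zsqrtd.norm x : ZMod (3 ^ m)) = (v : ZMod (3 ^ m))) :
    Nat.card ((ZMod (3 ^ m))ˣ ⧸ U) = 2 ∧
    Subgroup.zpowers
      (QuotientGroup.mk (-1 : (ZMod (3 ^ m))ˣ) : (ZMod (3 ^ m))ˣ ⧸ U) = ⊤ ∧
    (-1 : (ZMod (3 ^ m))ˣ) ∉ U := by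
  have hdvd : (3 : ℕ) ∣ 3 ^ m := dvd_pow_self 3 (by omega)
  haveI : NeZero (3 ^ m) := ⟨by positivity⟩
  set φ : (ZMod (3 ^ m))ˣ →* (ZMod 3)ˣ := ZMod.unitsMap hdvd with hφ
  have hUker : U = φ.ker := by
    ext v
    rw [hU v, MonoidHom.mem_ker]
    constructor
    · rintro ⟨x, -, hx⟩
      have hval : ((φ v : ZMod 3)) = ((x.re : ZMod 3)) ^ 2 := by
        have h1 : ((φ v : ZMod 3)) = ((Zsqrtd.norm x : ℤ) : ZMod 3) := by
          show (ZMod.castHom hdvd (ZMod 3)) (v : ZMod (3^m)) = _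
          rw [← hx, map_intCast]
        have h3 : ((3 : ℤ) : ZMod 3) = 0 := by decide
        rw [h1, show Zsqrtd.norm x = x.re * x.re - 3 * (x.im * x.im) by rw [Zsqrtd.norm]; ring]
        push_cast
        linear_combination (-(x.im : ZMod 3) * (x.im : ZMod 3)) * h3
      have hu : IsUnit ((φ v : ZMod 3)) := (φ v).isUnit
      have key : ∀ b : ZMod 3, b ≠ 0 → b ^ 2 = 1 := by decide
      refine Units.ext ?_
      rw [hval] at hu ⊢
      exact key _ (by rintro h0; rw [h0] at hu; simp at hu)
    · intro hv
      have hsurj : Function.Surjective φ := ZMod.unitsMap_surjective hdvd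
      have hcardG : Nat.card (ZMod (3 ^ m))ˣ = 2 * 3 ^ (m - 1) := by
        rw [Nat.card_eq_fintype_card, ZMod.card_units_eq_totient,
          Nat.totient_prime_pow (by norm_num) (by omega)]
        ring
      have hcard3 : Nat.card (ZMod 3)ˣ = 2 := by
        rw [Nat.card_eq_fintype_card, ZMod.card_units_eq_totient,
          Nat.totient_prime (by norm_num)]
      have hker : Nat.card φ.ker = 3 ^ (m - 1) := by
        have h1 := Subgroup.card_eq_card_quotient_mul_card_subgroup φ.ker
        have h2 : Nat.card ((ZMod (3 ^ m))ˣ ⧸ φ.ker) = 2 := by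
          rw [Nat.card_congr (QuotientGroup.quotientKerEquivOfSurjective φ hsurj).toEquiv]
          exact hcard3
        rw [h2, hcardG] at h1
        have h3 : 0 < Nat.card φ.ker := Nat.card_pos
        have h4 : 0 < (3:ℕ) ^ (m-1) := by positivity
        omega
      have hvpow : v ^ (3 ^ (m - 1)) = 1 := by
        have := pow_card_eq_one' (x := (⟨v, hv⟩ : φ.ker))
        rw [hker] at this
        exact congrArg Subtype.val this
      set w := v ^ ((3 ^ (m - 1) + 1) / 2) with hw
      have hodd : Odd ((3:ℕ) ^ (m - 1)) := Odd.pow (by decide)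
      have hsq : w ^ 2 = v := by
        rw [hw, ← pow_mul]
        obtain ⟨t, ht⟩ := hodd
        have h5 : (3 ^ (m - 1) + 1) / 2 * 2 = 3 ^ (m - 1) + 1 := by omega
        rw [h5, pow_succ, hvpow, one_mul]
      obtain ⟨n, hn⟩ : ∃ n : ℤ, n = ((w : ZMod (3 ^ m)).val : ℤ) := ⟨_, rfl⟩
      have hcop : IsCoprime n ((3 : ℤ) ^ k) := by
        have h1 : Nat.Coprime (w : ZMod (3 ^ m)).val (3 ^ m) := ZMod.val_coe_unit_coprime w
        have h2 : Nat.Coprime (w : ZMod (3 ^ m)).val 3 := Nat.Coprime.coprime_dvd_right hdvd h1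
        have h3 : Nat.Coprime (w : ZMod (3 ^ m)).val (3 ^ k) := h2.pow_right k
        rw [Int.isCoprime_iff_gcd_eq_one, hn,
          show ((3 : ℤ) ^ k) = ((3 ^ k : ℕ) : ℤ) by push_cast; ring,
          Int.gcd_natCast_natCast]
        exact h3
      refine ⟨(n : Zsqrtd 3), ?_, ?_⟩
      · obtain ⟨a, b, hab⟩ := hcop
        have h3k : Ideal.Quotient.mk (Ideal.span {(Zsqrtd.sqrtd : Zsqrtd 3) ^ k})
            (((3 : ℤ) ^ k : ℤ) : Zsqrtd 3) = 0 := by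
          rw [Ideal.Quotient.eq_zero_iff_mem, Ideal.mem_span_singleton]
          refine ⟨Zsqrtd.sqrtd ^ k, ?_⟩
          rw [← mul_pow]
          have hss : (Zsqrtd.sqrtd * Zsqrtd.sqrtd : Zsqrtd 3) = 3 := by
            ext <;> simp
          rw [hss]
          push_cast
          ring
        apply IsUnit.of_mul_eq_one (Ideal.Quotient.mk _ ((a : Zsqrtd 3)))
        rw [← map_mul]
        have hab' : ((a : ℤ) : Zsqrtd 3) * ((n : ℤ) : Zsqrtd 3) =
            1 - (((3 : ℤ) ^ k : ℤ) : Zsqrtd 3) * ((b : ℤ) : Zsqrtd 3) := by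
          rw [← Int.cast_mul, ← Int.cast_mul, ← Int.cast_one, ← Int.cast_sub]
          congr 1
          linarith [hab]
        rw [mul_comm, hab', map_sub, map_mul, h3k, zero_mul, sub_zero, map_one]
      · have hval2 : ((w : ZMod (3^m)))^2 = (v : ZMod (3^m)) := by
          rw [← Units.val_pow_eq_pow_val, hsq]
        rw [Zsqrtd.norm_intCast, hn]
        push_cast
        rw [ZMod.natCast_val, ZMod.cast_id, ← hval2]
        ring
  have hsurj : Function.Surjective φ := ZMod.unitsMap_surjective hdvd
  have hcard3 : Nat.card (ZMod 3)ˣ = 2 := by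
    rw [Nat.card_eq_fintype_card, ZMod.card_units_eq_totient,
      Nat.totient_prime (by norm_num)]
  have hcardQ : Nat.card ((ZMod (3 ^ m))ˣ ⧸ U) = 2 := by
    rw [hUker, Nat.card_congr (QuotientGroup.quotientKerEquivOfSurjective φ hsurj).toEquiv]
    exact hcard3
  have hne : (-1 : (ZMod (3 ^ m))ˣ) ∉ U := by
    rw [hUker, MonoidHom.mem_ker]
    intro h
    have hv : ((φ (-1) : ZMod 3)) = -1 := by
      show (ZMod.castHom hdvd (ZMod 3)) ((-1 : (ZMod (3^m))ˣ) : ZMod (3^m)) = -1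
      rw [Units.val_neg, Units.val_one, map_neg, map_one]
    rw [h, Units.val_one] at hv
    exact (by decide : ((1 : ZMod 3)) ≠ -1) hv
  refine ⟨hcardQ, ?_, hne⟩
  have hg : (QuotientGroup.mk (-1 : (ZMod (3 ^ m))ˣ) : (ZMod (3 ^ m))ˣ ⧸ U) ≠ 1 := by
    intro h
    rw [QuotientGroup.eq_one_iff] at h
    exact hne h
  haveI : Finite ((ZMod (3 ^ m))ˣ ⧸ U) := Nat.finite_of_card_ne_zero (by omega)
  apply Subgroup.eq_top_of_card_eq
  rw [Nat.card_zpowers, hcardQ]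
  have h1 : orderOf (QuotientGroup.mk (-1 : (ZMod (3 ^ m))ˣ) : (ZMod (3 ^ m))ˣ ⧸ U) ∣ 2 := by
    rw [← hcardQ]; exact orderOf_dvd_natCard _
  have h2 : orderOf (QuotientGroup.mk (-1 : (ZMod (3 ^ m))ˣ) : (ZMod (3 ^ m))ˣ ⧸ U) ≠ 1 :=
    fun h => hg (orderOf_eq_one_iff.mp h)
  rcases (Nat.dvd_prime Nat.prime_two).mp h1 with h | h
  · exact absurd h h2
  · exact h


/-- For every `k ≥ 1`, let `U_k ≤ (ℤ/3^⌈k/2⌉ℤ)ˣ` be the subgroup of norms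
`N(x) mod 3^⌈k/2⌉` of elements `x ∈ ℤ[√3]` that are units modulo `(√3)^k`.  Then the
quotient `(ℤ/3^⌈k/2⌉ℤ)ˣ / U_k` has order 2 and is generated by the class of `-1`;
in particular `-1 ∉ U_k`. -/
theorem stmt_7 (k : ℕ) (hk : 1 ≤ k)
    (U : Subgroup (ZMod (3 ^ ((k + 1) / 2)))ˣ)
    (hU : ∀ v : (ZMod (3 ^ ((k + 1) / 2)))ˣ,
      v ∈ U ↔ ∃ x : Zsqrtd 3,
        IsUnit (Ideal.Quotient.mk (Ideal.span {(Zsqrtd.sqrtd : Zsqrtd 3) ^ k}) x) ∧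
        (Zsqrtd.norm x : ZMod (3 ^ ((k + 1) / 2))) = (v : ZMod (3 ^ ((k + 1) / 2)))) :
    Nat.card ((ZMod (3 ^ ((k + 1) / 2)))ˣ ⧸ U) = 2 ∧
    Subgroup.zpowers
      (QuotientGroup.mk (-1 : (ZMod (3 ^ ((k + 1) / 2)))ˣ) :
        (ZMod (3 ^ ((k + 1) / 2)))ˣ ⧸ U) = ⊤ ∧
    (-1 : (ZMod (3 ^ ((k + 1) / 2)))ˣ) ∉ U := by
  exact stmt7_aux k ((k + 1) / 2) hk (by omega) U hU
end

section
/- For every integer k ≥ 1, let W_k ≤ (ℤ[√3]/(√3)^k)^× be the subgroup consisting of the classes modulo (√3)^k of the norms N(x), as x ranges over elements of ℤ[√3] whose class modulo (√3)^k is a unit. Then the quotient group (ℤ[√3]/(√3)^k)^× / W_k is cyclic of order 2·3^{⌊k/2⌋}, generated by the class of √3 − 1. -/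
set_option synthInstance.maxHeartbeats 1000000
set_option maxHeartbeats 400000
set_option linter.all false

/-- The quotient ring `ℤ[√3]/(√3)^k`. -/
abbrev Sqrt3Quot (k : ℕ) : Type :=
  Zsqrtd 3 ⧸ Ideal.span {(Zsqrtd.sqrtd : Zsqrtd 3) ^ k}

open Zsqrtd

namespace Stmt8

abbrev Ik (k : ℕ) : Ideal (Zsqrtd 3) := Ideal.span {(Zsqrtd.sqrtd : Zsqrtd 3) ^ k}
abbrev Rk (k : ℕ) : Type := Zsqrtd 3 ⧸ Ik k
abbrev qmk (k : ℕ) : Zsqrtd 3 →+* Rk k := Ideal.Quotient.mk (Ik k)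

lemma three_pow (f : ℕ) : ((3 : Zsqrtd 3))^f = (⟨3^f, 0⟩ : Zsqrtd 3) := by
  induction f with
  | zero => ext <;> simp
  | succ n ih =>
    rw [pow_succ, ih]
    ext <;> simp [Zsqrtd.re_mul, Zsqrtd.im_mul, Zsqrtd.re_ofNat, Zsqrtd.im_ofNat] <;> ring

lemma sqrtd_pow (k : ℕ) :
    (sqrtd : Zsqrtd 3) ^ k =
      if Even k then (⟨3^(k/2), 0⟩ : Zsqrtd 3) else (⟨0, 3^(k/2)⟩ : Zsqrtd 3) := by
  have hs : (sqrtd : Zsqrtd 3) ^ 2 = (3 : Zsqrtd 3) := by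
    ext <;> simp [pow_two, Zsqrtd.re_ofNat, Zsqrtd.im_ofNat]
  rcases Nat.even_or_odd k with hk | hk
  · obtain ⟨f, hf⟩ := hk
    have hq : k / 2 = f := by omega
    rw [if_pos ⟨f, hf⟩, hq, show k = 2 * f by omega, pow_mul, hs, three_pow]
  · obtain ⟨f, hf⟩ := hk
    have hq : k / 2 = f := by omega
    rw [if_neg (by simp [hf, parity_simps]), hq, show k = 2 * f + 1 by omega, pow_succ, pow_mul,
      hs, three_pow]
    ext <;> simp [Zsqrtd.re_mul, Zsqrtd.im_mul]

lemma mem_Ik {k : ℕ} (x : Zsqrtd 3) :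
    x ∈ Ik k ↔ (3:ℤ)^(k - k/2) ∣ x.re ∧ (3:ℤ)^(k/2) ∣ x.im := by
  rw [Ik, Ideal.mem_span_singleton, sqrtd_pow]
  rcases Nat.even_or_odd k with hk | hk
  · rw [if_pos hk]
    have h2 : k - k / 2 = k / 2 := by rcases hk with ⟨f, hf⟩; omega
    rw [h2]
    constructor
    · rintro ⟨z, rfl⟩
      exact ⟨⟨z.re, by simp only [Zsqrtd.re_mul]; ring⟩,
             ⟨z.im, by simp only [Zsqrtd.im_mul]; ring⟩⟩
    · rintro ⟨⟨r, hr⟩, ⟨i, hi⟩⟩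
      refine ⟨⟨r, i⟩, ?_⟩
      ext <;> simp only [Zsqrtd.re_mul, Zsqrtd.im_mul, hr, hi] <;> ring
  · rw [if_neg (Nat.not_even_iff_odd.mpr hk)]
    have h2 : k - k / 2 = k / 2 + 1 := by rcases hk with ⟨f, hf⟩; omega
    rw [h2]
    constructor
    · rintro ⟨z, rfl⟩
      exact ⟨⟨z.im, by simp only [Zsqrtd.re_mul]; ring⟩,
             ⟨z.re, by simp only [Zsqrtd.im_mul]; ring⟩⟩
    · rintro ⟨⟨r, hr⟩, ⟨i, hi⟩⟩
      refine ⟨⟨i, r⟩, ?_⟩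
      ext <;> simp only [Zsqrtd.re_mul, Zsqrtd.im_mul, hr, hi] <;> ring


/-- the residue map to `ZMod 3`. -/
def phi : Zsqrtd 3 →+* ZMod 3 where
  toFun x := (x.re : ZMod 3)
  map_one' := by simp
  map_mul' x y := by
    show (((x*y).re : ℤ) : ZMod 3) = _
    rw [Zsqrtd.re_mul]
    push_cast
    rw [show ((3:ZMod 3)) = 0 from by decide]
    ring
  map_zero' := by simp
  map_add' x y := by push_cast [Zsqrtd.re_add]; ring

@[simp] lemma phi_apply (x : Zsqrtd 3) : phi x = (x.re : ZMod 3) := rfl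

lemma phi_eq_zero_iff (x : Zsqrtd 3) : phi x = 0 ↔ (3:ℤ) ∣ x.re := by
  simp [ZMod.intCast_zmod_eq_zero_iff_dvd]

/-- the residue map on the quotient. -/
def psi (k : ℕ) (hk : 1 ≤ k) : Rk k →+* ZMod 3 :=
  Ideal.Quotient.lift (Ik k) phi (by
    intro a ha
    rw [mem_Ik] at ha
    rw [phi_eq_zero_iff]
    exact dvd_trans (dvd_pow_self 3 (by omega : k - k/2 ≠ 0)) ha.1)

@[simp] lemma psi_mk (k : ℕ) (hk : 1 ≤ k) (x : Zsqrtd 3) : psi k hk (qmk k x) = (x.re : ZMod 3) :=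
  Ideal.Quotient.lift_mk _ _ _

lemma re_not_dvd_of_isUnit {k : ℕ} (hk : 1 ≤ k) {x : Zsqrtd 3} (hx : IsUnit (qmk k x)) :
    ¬ (3:ℤ) ∣ x.re := by
  intro h
  have h2 : psi k hk (qmk k x) = 0 := by
    rw [psi_mk]
    simpa [ZMod.intCast_zmod_eq_zero_iff_dvd] using h
  have := hx.map (psi k hk)
  rw [h2] at this
  exact this.ne_zero rfl

/-- coordinates parametrization of `Rk`. -/
def coordFun (k : ℕ) : ZMod (3^(k - k/2)) × ZMod (3^(k/2)) → Rk k :=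
  fun p => qmk k ⟨(p.1.val : ℤ), (p.2.val : ℤ)⟩

lemma natCast_val_intCast {n : ℕ} [NeZero n] (a : ℤ) :
    (3:ℤ)^0 = 1 → ((((a : ZMod n).val : ℤ) - a : ℤ) : ZMod n) = 0 := by
  intro _
  push_cast
  simp [ZMod.intCast_cast, ZMod.natCast_val]

lemma coordFun_bijective (k : ℕ) : Function.Bijective (coordFun k) := by
  haveI : NeZero (3^(k - k/2)) := ⟨pow_ne_zero _ (by norm_num)⟩
  haveI : NeZero (3^(k/2)) := ⟨pow_ne_zero _ (by norm_num)⟩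
  constructor
  · rintro ⟨a, b⟩ ⟨a', b'⟩ h
    simp only [coordFun, Ideal.Quotient.mk_eq_mk_iff_sub_mem] at h
    rw [show (⟨(a.val : ℤ), (b.val : ℤ)⟩ - ⟨(a'.val : ℤ), (b'.val : ℤ)⟩ : Zsqrtd 3)
        = ⟨(a.val : ℤ) - a'.val, (b.val : ℤ) - b'.val⟩ from by ext <;> simp, mem_Ik] at h
    obtain ⟨h1, h2⟩ := h
    have e1 : a = a' := by
      have : ((a.val : ℤ) : ZMod (3^(k - k/2))) = ((a'.val : ℤ) : ZMod (3^(k - k/2))) := by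
        have := (ZMod.intCast_zmod_eq_zero_iff_dvd _ (3^(k - k/2))).mpr (by push_cast at h1 ⊢; exact h1)
        push_cast at this ⊢
        linear_combination this
      simpa [ZMod.natCast_val, ZMod.cast_id] using this
    have e2 : b = b' := by
      have : ((b.val : ℤ) : ZMod (3^(k/2))) = ((b'.val : ℤ) : ZMod (3^(k/2))) := by
        have := (ZMod.intCast_zmod_eq_zero_iff_dvd _ (3^(k/2))).mpr (by push_cast at h2 ⊢; exact h2)
        push_cast at this ⊢
        linear_combination this
      simpa [ZMod.natCast_val, ZMod.cast_id] using this
    rw [e1, e2]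
  · intro x
    obtain ⟨y, rfl⟩ := Ideal.Quotient.mk_surjective x
    refine ⟨⟨(y.re : ZMod (3^(k - k/2))), (y.im : ZMod (3^(k/2)))⟩, ?_⟩
    simp only [coordFun, Ideal.Quotient.mk_eq_mk_iff_sub_mem]
    rw [show (⟨((((y.re : ZMod (3^(k - k/2)))).val : ℤ)), ((((y.im : ZMod (3^(k/2)))).val : ℤ))⟩
        - y : Zsqrtd 3) = ⟨((((y.re : ZMod (3^(k - k/2)))).val : ℤ)) - y.re,
          ((((y.im : ZMod (3^(k/2)))).val : ℤ)) - y.im⟩ from by ext <;> simp, mem_Ik]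
    constructor
    · have h0 : ((((y.re : ZMod (3^(k - k/2))).val : ℤ) - y.re : ℤ) : ZMod (3^(k - k/2))) = 0 := by
        push_cast
        simp [ZMod.intCast_cast, ZMod.natCast_val]
      have := (ZMod.intCast_zmod_eq_zero_iff_dvd _ _).mp h0
      push_cast at this ⊢
      exact this
    · have h0 : ((((y.im : ZMod (3^(k/2))).val : ℤ) - y.im : ℤ) : ZMod (3^(k/2))) = 0 := by
        push_cast
        simp [ZMod.intCast_cast, ZMod.natCast_val]
      have := (ZMod.intCast_zmod_eq_zero_iff_dvd _ _).mp h0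
      push_cast at this ⊢
      exact this

lemma card_Rk (k : ℕ) : Nat.card (Rk k) = 3^k := by
  haveI : NeZero (3^(k - k/2)) := ⟨pow_ne_zero _ (by norm_num)⟩
  haveI : NeZero (3^(k/2)) := ⟨pow_ne_zero _ (by norm_num)⟩
  rw [← Nat.card_congr (Equiv.ofBijective _ (coordFun_bijective k))]
  rw [Nat.card_prod, Nat.card_zmod, Nat.card_zmod, ← pow_add]
  congr 1
  omega

instance (k : ℕ) : Finite (Rk k) := by
  have := card_Rk k
  rcases Nat.finite_of_card_ne_zero (by rw [this]; positivity) with h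
  exact h


lemma intCast_mk (k : ℕ) (a : ℤ) : ((a : Rk k)) = qmk k (a : Zsqrtd 3) :=
  (map_intCast (qmk k) a).symm

lemma intCast_eq_intCast (k : ℕ) {a b : ℤ} (h : a ≡ b [ZMOD (3:ℤ)^(k - k/2)]) :
    ((a : Rk k)) = (b : Rk k) := by
  rw [intCast_mk, intCast_mk, Ideal.Quotient.mk_eq_mk_iff_sub_mem,
    show ((a:Zsqrtd 3) - b) = ((a - b : ℤ) : Zsqrtd 3) from by push_cast; ring, mem_Ik]
  constructor
  · rw [Zsqrtd.re_intCast]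
    exact h.symm.dvd
  · simp [Zsqrtd.im_intCast]

lemma sq_mod_three {a : ℤ} (h : ¬ (3:ℤ) ∣ a) : a * a ≡ 1 [ZMOD 3] := by
  rw [Int.modEq_iff_dvd]
  have h3 : (3:ℤ) ∣ a - 1 ∨ (3:ℤ) ∣ a + 1 := by omega
  rcases h3 with ⟨t, ht⟩ | ⟨t, ht⟩
  · exact ⟨-(t*(a+1)), by linear_combination (-(a+1)) * ht⟩
  · exact ⟨-(t*(a-1)), by linear_combination (-(a-1)) * ht⟩

lemma exists_sqrt (j : ℕ) {c : ℤ} (hc : c ≡ 1 [ZMOD 3]) :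
    ∃ a : ℤ, a * a ≡ c [ZMOD (3:ℤ)^(j+1)] := by
  induction j with
  | zero => exact ⟨1, by simpa using hc.symm⟩
  | succ n ih =>
    obtain ⟨a, ha⟩ := ih
    have hdvd : (3:ℤ)^(n+1) ∣ c - a * a := (Int.modEq_iff_dvd.mp ha)
    obtain ⟨t, ht⟩ := hdvd
    have h3a : ¬ (3:ℤ) ∣ a := by
      rintro ⟨s, rfl⟩
      have h1 : (3:ℤ) ∣ c - 9 * (s*s) := by
        have hh : (3:ℤ)^(n+1) ∣ c - 9 * (s*s) := ⟨t, by linear_combination ht⟩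
        exact dvd_trans (dvd_pow_self 3 (Nat.succ_ne_zero n)) hh
      have h2 : (3:ℤ) ∣ 1 - c := hc.dvd
      obtain ⟨X, hX⟩ : ∃ X, s * s = X := ⟨_, rfl⟩
      rw [hX] at h1
      omega
    have hw : (3:ℤ) ∣ 1 - 4 * (a * a) := by
      have := sq_mod_three h3a
      have h2 : (3:ℤ) ∣ 1 - a * a := this.dvd
      obtain ⟨w, hw⟩ := h2
      exact ⟨w - a*a, by linear_combination hw⟩
    obtain ⟨w, hw⟩ := hw
    refine ⟨a + 3^(n+1) * (2 * a * t), ?_⟩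
    rw [Int.modEq_iff_dvd]
    exact ⟨t*w - 3^n*4*(a*a)*(t*t), by linear_combination ht + 3^(n+1)*t*hw⟩
  
lemma isUnit_intCast (k : ℕ) {a : ℤ} (h : ¬ (3:ℤ) ∣ a) : IsUnit ((a : Rk k)) := by
  have hc : IsCoprime (a:ℤ) 3 := by
    have h3 : a % 3 = 1 ∨ a % 3 = 2 := by omega
    rcases h3 with h3 | h3
    · exact ⟨1, -(a/3), by omega⟩
    · exact ⟨-1, (a/3) + 1, by omega⟩
  obtain ⟨u, v, huv⟩ := hc.pow_right (n := k - k/2)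
  refine IsUnit.of_mul_eq_one ((u : Rk k)) ?_
  have : a * u ≡ 1 [ZMOD (3:ℤ)^(k - k/2)] := by
    rw [Int.modEq_iff_dvd]
    exact ⟨v, by linear_combination -huv⟩
  calc (a : Rk k) * u = ((a * u : ℤ) : Rk k) := by push_cast; ring
    _ = ((1:ℤ) : Rk k) := intCast_eq_intCast k this
    _ = 1 := by norm_num

lemma mem_W_iff {k : ℕ} (hk : 1 ≤ k) (W : Subgroup (Rk k)ˣ)
    (hW : ∀ u : (Rk k)ˣ, u ∈ W ↔ ∃ x : Zsqrtd 3,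
      IsUnit (qmk k x) ∧ ((Zsqrtd.norm x : Rk k) = (u : Rk k)))
    (u : (Rk k)ˣ) :
    u ∈ W ↔ ∃ c : ℤ, c ≡ 1 [ZMOD 3] ∧ ((c : Rk k) = (u : Rk k)) := by
  rw [hW]
  constructor
  · rintro ⟨x, hx, hn⟩
    refine ⟨Zsqrtd.norm x, ?_, hn⟩
    have h1 : ¬ (3:ℤ) ∣ x.re := re_not_dvd_of_isUnit hk hx
    have h2 : Zsqrtd.norm x ≡ x.re * x.re [ZMOD 3] := by
      rw [Int.modEq_iff_dvd, Zsqrtd.norm_def]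
      exact ⟨x.im * x.im, by push_cast; ring⟩
    exact h2.trans (sq_mod_three h1)
  · rintro ⟨c, hc, hcu⟩
    have hm : k - k/2 - 1 + 1 = k - k/2 := by omega
    obtain ⟨a, ha⟩ := exists_sqrt (k - k/2 - 1) hc
    rw [hm] at ha
    have h3a : ¬ (3:ℤ) ∣ a := by
      rintro ⟨s, rfl⟩
      have h1 : (3:ℤ) ∣ c - 9 * (s*s) := by
        obtain ⟨t, ht⟩ := (Int.modEq_iff_dvd.mp ha)
        have hh : (3:ℤ)^(k - k/2) ∣ c - 9 * (s*s) := ⟨t, by linear_combination ht⟩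
        exact dvd_trans (dvd_pow_self (3:ℤ) (by omega : k - k/2 ≠ 0)) hh
      have h2 : (3:ℤ) ∣ 1 - c := hc.dvd
      obtain ⟨X, hX⟩ : ∃ X, s * s = X := ⟨_, rfl⟩
      rw [hX] at h1
      omega
    refine ⟨(a : Zsqrtd 3), ?_, ?_⟩
    · rw [← intCast_mk]
      exact isUnit_intCast k h3a
    · rw [Zsqrtd.norm_intCast, ← hcu]
      exact intCast_eq_intCast k ha


section counting

lemma psi_surjective (k : ℕ) (hk : 1 ≤ k) : Function.Surjective (psi k hk) := by
  intro v
  obtain ⟨n, rfl⟩ := ZMod.intCast_surjective v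
  exact ⟨qmk k ((n:ℤ) : Zsqrtd 3), by simp [psi_mk, Zsqrtd.re_intCast]⟩

lemma card_ker_psi (k : ℕ) (hk : 1 ≤ k) :
    Nat.card (AddMonoidHom.ker (psi k hk).toAddMonoidHom) = 3^(k-1) := by
  have h1 := AddSubgroup.card_eq_card_quotient_mul_card_addSubgroup
    (AddMonoidHom.ker (psi k hk).toAddMonoidHom)
  have h2 : Nat.card (Rk k ⧸ AddMonoidHom.ker (psi k hk).toAddMonoidHom) = 3 := by
    have e := QuotientAddGroup.quotientKerEquivOfSurjective
      (psi k hk).toAddMonoidHom (psi_surjective k hk)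
    rw [Nat.card_congr e.toEquiv, Nat.card_zmod]
  rw [card_Rk, h2] at h1
  have h5 : (3:ℕ)^k = 3 * 3^(k-1) := by
    rw [← pow_succ']
    congr 1
    omega
  rw [h5] at h1
  exact (Nat.eq_of_mul_eq_mul_left (by norm_num) h1.symm)

lemma nilpotent_of_psi_eq_zero (k : ℕ) (hk : 1 ≤ k) (x : Rk k) (hx : psi k hk x = 0) : IsNilpotent x := by
  obtain ⟨y, rfl⟩ := Ideal.Quotient.mk_surjective x
  rw [psi_mk, ZMod.intCast_zmod_eq_zero_iff_dvd] at hx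
  have hy : y ∈ Ik 1 := by
    rw [mem_Ik]
    refine ⟨by simpa using hx, by simp⟩
  rw [Ik, Ideal.mem_span_singleton, pow_one] at hy
  obtain ⟨z, rfl⟩ := hy
  refine ⟨k, ?_⟩
  rw [← map_pow, Ideal.Quotient.eq_zero_iff_mem, Ik, Ideal.mem_span_singleton, mul_pow]
  exact Dvd.intro _ rfl

abbrev Um (k : ℕ) (hk : 1 ≤ k) : (Rk k)ˣ →* (ZMod 3)ˣ := Units.map (psi k hk).toMonoidHom

lemma Um_surjective (k : ℕ) (hk : 1 ≤ k) : Function.Surjective (Um k hk) := by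
  intro v
  have hall : ∀ w : (ZMod 3)ˣ, w = 1 ∨ w = -1 := by decide
  have hv := hall v
  rcases hv with rfl | rfl
  · exact ⟨1, map_one _⟩
  · refine ⟨-1, ?_⟩
    ext
    simp

lemma mem_ker_psi_iff (k : ℕ) (hk : 1 ≤ k) (x : Rk k) :
    x ∈ AddMonoidHom.ker (psi k hk).toAddMonoidHom ↔ psi k hk x = 0 := Iff.rfl

lemma nil_of_mem_ker (k : ℕ) (hk : 1 ≤ k) (x : AddMonoidHom.ker (psi k hk).toAddMonoidHom) :
    IsNilpotent (x : Rk k) :=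
  nilpotent_of_psi_eq_zero k hk _ ((mem_ker_psi_iff k hk _).mp x.2)

/-- The kernel of the units-level reduction is in bijection with the kernel ideal. -/
noncomputable def kerUmEquiv (k : ℕ) (hk : 1 ≤ k) :
    MonoidHom.ker (Um k hk) ≃ AddMonoidHom.ker (psi k hk).toAddMonoidHom where
  toFun u := ⟨((u : (Rk k)ˣ) : Rk k) - 1, by
    have hu : psi k hk ((u : (Rk k)ˣ) : Rk k) = 1 := by
      have h2 := u.2
      rw [MonoidHom.mem_ker] at h2
      exact congrArg Units.val h2
    rw [mem_ker_psi_iff, map_sub, hu, map_one, sub_self]⟩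
  invFun x := ⟨((nil_of_mem_ker k hk x).isUnit_one_add).unit, by
      rw [MonoidHom.mem_ker]
      ext
      have hval : ((((nil_of_mem_ker k hk x).isUnit_one_add).unit : (Rk k)ˣ) : Rk k)
          = 1 + (x : Rk k) := IsUnit.unit_spec _
      have hx : psi k hk (x : Rk k) = 0 := (mem_ker_psi_iff k hk _).mp x.2
      show psi k hk _ = _
      rw [hval, map_add, map_one, hx, add_zero]
      rfl⟩
  left_inv u := by
    apply Subtype.ext
    apply Units.ext
    simp [IsUnit.unit_spec]
  right_inv x := by
    apply Subtype.ext
    simp [IsUnit.unit_spec]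

lemma card_units (k : ℕ) (hk : 1 ≤ k) : Nat.card (Rk k)ˣ = 2 * 3^(k-1) := by
  have h1 := Subgroup.card_eq_card_quotient_mul_card_subgroup (MonoidHom.ker (Um k hk))
  have h2 : Nat.card ((Rk k)ˣ ⧸ MonoidHom.ker (Um k hk)) = 2 := by
    have e := QuotientGroup.quotientKerEquivOfSurjective (Um k hk) (Um_surjective k hk)
    rw [Nat.card_congr e.toEquiv, Nat.card_eq_fintype_card]
    decide
  have h3 : Nat.card (MonoidHom.ker (Um k hk)) = 3^(k-1) := by
    rw [Nat.card_congr (kerUmEquiv k hk), card_ker_psi]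
  rw [h1, h2, h3]

end counting


/-- `Rk k` has characteristic `3 ^ (k - k/2)`. -/
lemma charP (k : ℕ) : CharP (Rk k) (3^(k - k/2)) := by
  constructor
  intro n
  rw [show ((n : ℕ) : Rk k) = qmk k ((n:ℕ) : Zsqrtd 3) from (map_natCast (qmk k) n).symm,
    Ideal.Quotient.eq_zero_iff_mem, mem_Ik]
  constructor
  · rintro ⟨h1, -⟩
    rw [Zsqrtd.re_natCast] at h1
    exact_mod_cast (by exact_mod_cast h1 : ((3^(k - k/2) : ℕ) : ℤ) ∣ (n:ℤ))
  · rintro ⟨t, rfl⟩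
    constructor
    · rw [Zsqrtd.re_natCast]
      push_cast
      exact ⟨t, rfl⟩
    · rw [Zsqrtd.im_natCast]
      exact dvd_zero _

noncomputable def chi (k : ℕ) : ZMod (3^(k - k/2)) →+* Rk k :=
  letI := charP k
  ZMod.castHom dvd_rfl (Rk k)

lemma chi_injective (k : ℕ) : Function.Injective (chi k) := by
  letI := charP k
  exact ZMod.castHom_injective (Rk k)

lemma chi_intCast (k : ℕ) (a : ℤ) : chi k ((a : ZMod (3^(k - k/2)))) = (a : Rk k) :=
  map_intCast (chi k) a

lemma three_not_dvd_of_unit_zmod {m : ℕ} (hm : m ≠ 0) (v : (ZMod (3^m))ˣ) :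
    ¬ (3:ℤ) ∣ ((v : ZMod (3^m)).val : ℤ) := by
  haveI : NeZero (3^m) := ⟨pow_ne_zero _ (by norm_num)⟩
  intro ⟨s, hs⟩
  set b : ℤ := ((v : ZMod (3^m)).val : ℤ) with hb
  set e : ℤ := (((v⁻¹ : (ZMod (3^m))ˣ) : ZMod (3^m)).val : ℤ) with he
  have hcast : ((b * e - 1 : ℤ) : ZMod (3^m)) = 0 := by
    push_cast [hb, he]
    simp only [ZMod.natCast_val, ZMod.cast_id]
    rw [Units.mul_inv]
    ring
  have hdvd : ((3:ℤ)^m) ∣ b * e - 1 := by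
    have := (ZMod.intCast_zmod_eq_zero_iff_dvd _ _).mp hcast
    exact_mod_cast this
  have h3 : (3:ℤ) ∣ b * e - 1 := dvd_trans (dvd_pow_self 3 hm) hdvd
  rw [hs] at h3
  obtain ⟨w, hw⟩ := h3
  obtain ⟨X, hX⟩ : ∃ X, s * e = X := ⟨_, rfl⟩
  rw [show 3 * s * e - 1 = 3 * (s*e) - 1 from by ring, hX] at hw
  omega

lemma units_sq_eq_one {m : ℕ} (hm : m ≠ 0) (v : (ZMod (3^m))ˣ) (hv : v^2 = 1) :
    v = 1 ∨ v = -1 := by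
  haveI : NeZero (3^m) := ⟨pow_ne_zero _ (by norm_num)⟩
  set x : ℤ := ((v : ZMod (3^m)).val : ℤ) with hx
  have hxv : ((x : ℤ) : ZMod (3^m)) = (v : ZMod (3^m)) := by
    rw [hx]
    push_cast
    simp [ZMod.natCast_val, ZMod.cast_id]
  have hcast : ((x * x - 1 : ℤ) : ZMod (3^m)) = 0 := by
    push_cast [hxv]
    have : ((v : ZMod (3^m)) * (v : ZMod (3^m))) = 1 := by
      have := congrArg Units.val hv
      rwa [Units.val_pow_eq_pow_val, pow_two] at this
    rw [this]
    ring
  have hdvd : ((3:ℤ)^m) ∣ (x - 1) * (x + 1) := by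
    have := (ZMod.intCast_zmod_eq_zero_iff_dvd _ _).mp hcast
    have h2 : ((3:ℤ)^m) ∣ x * x - 1 := by exact_mod_cast this
    rwa [show x * x - 1 = (x-1)*(x+1) from by ring] at h2
  have hnot : ¬ (3:ℤ) ∣ (x - 1) ∨ ¬ (3:ℤ) ∣ (x + 1) := by omega
  rcases hnot with h | h
  · right
    have h31 : ((3:ℤ)^m) ∣ x + 1 := (Int.prime_three).pow_dvd_of_dvd_mul_left m h hdvd
    apply Units.ext
    have : ((x + 1 : ℤ) : ZMod (3^m)) = 0 := by
      rw [ZMod.intCast_zmod_eq_zero_iff_dvd]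
      exact_mod_cast h31
    push_cast at this
    rw [hxv] at this
    have := eq_neg_of_add_eq_zero_left this
    simpa using this
  · left
    have h31 : ((3:ℤ)^m) ∣ x - 1 := by
      have hdvd' : ((3:ℤ)^m) ∣ (x + 1) * (x - 1) := by rwa [mul_comm] at hdvd
      exact (Int.prime_three).pow_dvd_of_dvd_mul_left m h hdvd' 
    apply Units.ext
    have : ((x - 1 : ℤ) : ZMod (3^m)) = 0 := by
      rw [ZMod.intCast_zmod_eq_zero_iff_dvd]
      exact_mod_cast h31
    push_cast at this
    rw [hxv] at this
    have := sub_eq_zero.mp this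
    simpa using this

lemma isCoprime_three {a : ℤ} (h : ¬ (3:ℤ) ∣ a) : IsCoprime a 3 := by
  have h3 : a % 3 = 1 ∨ a % 3 = 2 := by omega
  rcases h3 with h3 | h3
  · exact ⟨1, -(a/3), by omega⟩
  · exact ⟨-1, (a/3) + 1, by omega⟩

lemma isUnit_zmod_intCast {m : ℕ} {a : ℤ} (h : ¬ (3:ℤ) ∣ a) :
    IsUnit ((a : ZMod (3^m))) := by
  obtain ⟨u, v, huv⟩ := (isCoprime_three h).pow_right (n := m)
  refine IsUnit.of_mul_eq_one ((u : ZMod (3^m))) ?_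
  have : ((a * u - 1 : ℤ) : ZMod (3^m)) = 0 := by
    rw [ZMod.intCast_zmod_eq_zero_iff_dvd]
    refine ⟨-v, ?_⟩
    push_cast
    linear_combination huv
  push_cast at this
  linear_combination this

section Wcount

variable (k : ℕ)

abbrev G3 (k : ℕ) := (ZMod (3^(k - k/2)))ˣ

noncomputable abbrev cU (k : ℕ) : G3 k →* (Rk k)ˣ := Units.map (chi k).toMonoidHom

abbrev Sq (k : ℕ) : Subgroup (G3 k) := (powMonoidHom 2 : G3 k →* G3 k).range

lemma W_eq (hk : 1 ≤ k) (W : Subgroup (Rk k)ˣ)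
    (hW : ∀ u : (Rk k)ˣ, u ∈ W ↔ ∃ x : Zsqrtd 3,
      IsUnit (qmk k x) ∧ ((Zsqrtd.norm x : Rk k) = (u : Rk k))) :
    W = (Sq k).map (cU k) := by
  have hm : k - k/2 - 1 + 1 = k - k/2 := by omega
  have hmne : k - k/2 ≠ 0 := by omega
  ext u
  rw [mem_W_iff hk W hW, Subgroup.mem_map]
  constructor
  · rintro ⟨c, hc, hcu⟩
    obtain ⟨a, ha⟩ := exists_sqrt (k - k/2 - 1) hc
    rw [hm] at ha
    have h3a : ¬ (3:ℤ) ∣ a := by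
      rintro ⟨s, rfl⟩
      have h1 : (3:ℤ) ∣ c - 9 * (s*s) := by
        obtain ⟨t, ht⟩ := (Int.modEq_iff_dvd.mp ha)
        have hh : (3:ℤ)^(k - k/2) ∣ c - 9 * (s*s) := ⟨t, by linear_combination ht⟩
        exact dvd_trans (dvd_pow_self (3:ℤ) hmne) hh
      have h2 : (3:ℤ) ∣ 1 - c := hc.dvd
      obtain ⟨X, hX⟩ : ∃ X, s * s = X := ⟨_, rfl⟩
      rw [hX] at h1
      omega
    have hu : IsUnit ((a : ZMod (3^(k - k/2)))) := isUnit_zmod_intCast h3a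
    refine ⟨hu.unit^2, ⟨hu.unit, rfl⟩, ?_⟩
    apply Units.ext
    show chi k ((hu.unit^2 : G3 k) : ZMod (3^(k - k/2))) = (u : Rk k)
    rw [Units.val_pow_eq_pow_val, IsUnit.unit_spec, pow_two, map_mul, chi_intCast,
      ← Int.cast_mul, intCast_eq_intCast k ha, hcu]
  · rintro ⟨w, ⟨v, rfl⟩, hmap⟩
    set b : ℤ := ((v : ZMod (3^(k - k/2))).val : ℤ) with hb
    have h3b : ¬ (3:ℤ) ∣ b := three_not_dvd_of_unit_zmod hmne v
    refine ⟨b * b, sq_mod_three h3b, ?_⟩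
    rw [← hmap]
    show _ = ((cU k) (powMonoidHom 2 v) : Rk k)
    have : ((cU k) (powMonoidHom 2 v) : Rk k) = chi k (((v:ZMod (3^(k - k/2))))^2) := by
      show chi k _ = _
      congr 1
      try exact Units.val_pow_eq_pow_val _ _
    have hbv : chi k ((b : ZMod (3^(k - k/2)))) = chi k ((v : ZMod (3^(k - k/2)))) := by
      congr 1
      rw [hb]
      push_cast
      simp [ZMod.natCast_val, ZMod.cast_id]
    rw [this, pow_two, map_mul, ← hbv, chi_intCast, Int.cast_mul]

lemma card_G3 (hk : 1 ≤ k) : Nat.card (G3 k) = 2 * 3^(k - k/2 - 1) := by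
  haveI : NeZero (3^(k - k/2)) := ⟨pow_ne_zero _ (by norm_num)⟩
  rw [Nat.card_eq_fintype_card, ZMod.card_units_eq_totient,
    Nat.totient_prime_pow (by norm_num) (by omega : 0 < k - k/2)]
  ring

lemma card_Sq (hk : 1 ≤ k) : Nat.card (Sq k) = 3^(k - k/2 - 1) := by
  haveI : NeZero (3^(k - k/2)) := ⟨pow_ne_zero _ (by norm_num)⟩
  have hker : ((powMonoidHom 2 : G3 k →* G3 k).ker : Set (G3 k)) = {1, -1} := by
    ext v
    simp only [SetLike.mem_coe, MonoidHom.mem_ker, powMonoidHom_apply, Set.mem_insert_iff,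
      Set.mem_singleton_iff]
    constructor
    · exact units_sq_eq_one (by omega : k - k/2 ≠ 0) v
    · rintro (rfl | rfl) <;> norm_num
  have hcardker : Nat.card (powMonoidHom 2 : G3 k →* G3 k).ker = 2 := by
    have h1 : Nat.card (powMonoidHom 2 : G3 k →* G3 k).ker
        = Nat.card ({1, -1} : Set (G3 k)) := by
      apply Nat.card_congr
      exact Equiv.setCongr hker
    rw [h1, Nat.card_coe_set_eq, Set.ncard_pair]
    intro h
    haveI : Fact (2 < 3^(k - k/2)) := ⟨by
      calc 2 < 3^1 := by norm_num
      _ ≤ 3^(k - k/2) := Nat.pow_le_pow_right (by norm_num) (by omega)⟩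
    have := congrArg Units.val h
    simp only [Units.val_one] at this
    exact ZMod.neg_one_ne_one this.symm
  have h1 := Subgroup.card_eq_card_quotient_mul_card_subgroup
    (powMonoidHom 2 : G3 k →* G3 k).ker
  have h2 : Nat.card (G3 k ⧸ (powMonoidHom 2 : G3 k →* G3 k).ker) = Nat.card (Sq k) :=
    Nat.card_congr (QuotientGroup.quotientKerEquivRange _).toEquiv
  rw [card_G3 k hk, h2, hcardker] at h1
  omega

lemma card_W (hk : 1 ≤ k) (W : Subgroup (Rk k)ˣ)
    (hW : ∀ u : (Rk k)ˣ, u ∈ W ↔ ∃ x : Zsqrtd 3,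
      IsUnit (qmk k x) ∧ ((Zsqrtd.norm x : Rk k) = (u : Rk k))) :
    Nat.card W = 3^(k - k/2 - 1) := by
  rw [W_eq k hk W hW, ← card_Sq k hk]
  apply Nat.card_congr
  have hinj : Function.Injective (cU k) := by
    intro a b h
    apply Units.ext
    apply chi_injective k
    exact congrArg Units.val h
  exact ((Sq k).equivMapOfInjective (cU k) hinj).toEquiv.symm

end Wcount


lemma g_re_pow (n : ℕ) : ((sqrtd - 1 : Zsqrtd 3)^n).re ≡ (-1)^n [ZMOD 3] := by
  induction n with
  | zero => simp
  | succ n ih =>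
    have hre : ((sqrtd - 1 : Zsqrtd 3)^(n+1)).re
        = -((sqrtd - 1 : Zsqrtd 3)^n).re + 3 * ((sqrtd - 1 : Zsqrtd 3)^n).im := by
      rw [pow_succ']
      rw [Zsqrtd.re_mul]
      simp [Zsqrtd.re_sub, Zsqrtd.im_sub, Zsqrtd.re_sqrtd, Zsqrtd.im_sqrtd]
    have h1 : -((sqrtd - 1 : Zsqrtd 3)^n).re + 3 * ((sqrtd - 1 : Zsqrtd 3)^n).im
        ≡ -((sqrtd - 1 : Zsqrtd 3)^n).re [ZMOD 3] := by
      rw [Int.modEq_iff_dvd]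
      exact ⟨-((sqrtd - 1 : Zsqrtd 3)^n).im, by ring⟩
    rw [hre, pow_succ, show ((-1:ℤ)^n * -1) = -((-1:ℤ)^n) from by ring]
    exact h1.trans ih.neg

lemma big (j : ℕ) : ∃ A b : ℤ, ((sqrtd - 1 : Zsqrtd 3)^2)^(3^j) = ⟨A, 3^j * b⟩
    ∧ A ≡ 1 [ZMOD 3] ∧ ¬ (3:ℤ) ∣ b ∧ ¬ (3:ℤ) ∣ (A^2 + ((3:ℤ)^j * b)^2) := by
  induction j with
  | zero =>
    refine ⟨4, -2, ?_, by decide, by decide, by decide⟩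
    ext <;>
      simp [pow_two, Zsqrtd.re_mul, Zsqrtd.im_mul, Zsqrtd.re_sub, Zsqrtd.im_sub,
        Zsqrtd.re_sqrtd, Zsqrtd.im_sqrtd] <;> norm_num
  | succ n ih =>
    obtain ⟨A, b, hX, hA, hb, hs⟩ := ih
    refine ⟨A*(A^2 + 9*((3:ℤ)^n*b)^2), b*(A^2+((3:ℤ)^n*b)^2), ?_, ?_, ?_, ?_⟩
    · rw [show (3:ℕ)^(n+1) = 3^n * 3 from pow_succ 3 n, pow_mul, hX]
      ext <;>
        simp [pow_succ, pow_zero, one_mul, Zsqrtd.re_mul, Zsqrtd.im_mul] <;> push_cast <;> ring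
    · have h1 : A^3 ≡ 1 [ZMOD 3] := by
        have := hA.pow 3
        simpa using this
      refine Int.ModEq.trans ?_ h1
      rw [Int.modEq_iff_dvd]
      exact ⟨-(3*A*((3:ℤ)^n*b)^2), by ring⟩
    · intro h
      rcases (Int.prime_three.dvd_mul.mp h) with h | h
      · exact hb h
      · exact hs h
    · intro h
      have h3 : (3:ℤ) ∣ ((3:ℤ)^(n+1) * (b*(A^2+((3:ℤ)^n*b)^2)))^2 := by
        refine dvd_pow ?_ (by norm_num)
        exact Dvd.dvd.mul_right (dvd_pow_self 3 (Nat.succ_ne_zero n)) _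
      have h4 : (3:ℤ) ∣ (A*(A^2 + 9*((3:ℤ)^n*b)^2))^2 := by
        have := dvd_sub h h3
        simpa using this
      have h5 : (3:ℤ) ∣ A*(A^2 + 9*((3:ℤ)^n*b)^2) := Int.prime_three.dvd_of_dvd_pow h4
      have h6 : (3:ℤ) ∣ 1 - A := hA.dvd
      have h7 : (3:ℤ) ∣ A^3 := by
        have h8 : (3:ℤ) ∣ 3*(3*A*((3:ℤ)^n*b)^2) := Dvd.intro _ rfl
        have := dvd_sub h5 h8
        rwa [show A*(A^2 + 9*((3:ℤ)^n*b)^2) - 3*(3*A*((3:ℤ)^n*b)^2) = A^3 from by ring] at this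
      have h9 : (3:ℤ) ∣ A := Int.prime_three.dvd_of_dvd_pow h7
      omega

section main

lemma gpow_mem_W_iff (k : ℕ) (hk : 1 ≤ k) (W : Subgroup (Rk k)ˣ)
    (hW : ∀ u : (Rk k)ˣ, u ∈ W ↔ ∃ x : Zsqrtd 3,
      IsUnit (qmk k x) ∧ ((Zsqrtd.norm x : Rk k) = (u : Rk k)))
    (g : (Rk k)ˣ) (hg : (g : Rk k) = qmk k (sqrtd - 1)) (n : ℕ) :
    g^n ∈ W ↔ (((sqrtd - 1 : Zsqrtd 3)^n).re ≡ 1 [ZMOD 3]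
      ∧ (3:ℤ)^(k/2) ∣ ((sqrtd - 1 : Zsqrtd 3)^n).im) := by
  rw [mem_W_iff hk W hW]
  have hval : ((g^n : (Rk k)ˣ) : Rk k) = qmk k ((sqrtd - 1)^n) := by
    rw [Units.val_pow_eq_pow_val, hg, ← map_pow]
  constructor
  · rintro ⟨c, hc, hcu⟩
    rw [hval, intCast_mk, Ideal.Quotient.mk_eq_mk_iff_sub_mem] at hcu
    rw [show ((c : Zsqrtd 3) - (sqrtd - 1)^n)
        = (⟨c - ((sqrtd - 1 : Zsqrtd 3)^n).re, -((sqrtd - 1 : Zsqrtd 3)^n).im⟩ : Zsqrtd 3)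
      from by ext <;> simp [Zsqrtd.re_sub, Zsqrtd.im_sub, Zsqrtd.re_intCast, Zsqrtd.im_intCast],
      mem_Ik] at hcu
    obtain ⟨h1, h2⟩ := hcu
    constructor
    · have h3 : (3:ℤ) ∣ c - ((sqrtd - 1 : Zsqrtd 3)^n).re :=
        dvd_trans (dvd_pow_self 3 (by omega : k - k/2 ≠ 0)) h1
      have h4 : (3:ℤ) ∣ 1 - c := hc.dvd
      rw [Int.modEq_iff_dvd]
      clear h1 h2
      omega
    · rwa [dvd_neg] at h2
  · rintro ⟨h1, h2⟩
    refine ⟨((sqrtd - 1 : Zsqrtd 3)^n).re, h1, ?_⟩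
    rw [hval, intCast_mk, Ideal.Quotient.mk_eq_mk_iff_sub_mem]
    rw [show (((((sqrtd - 1 : Zsqrtd 3)^n).re : ℤ) : Zsqrtd 3) - (sqrtd - 1)^n)
        = (⟨0, -((sqrtd - 1 : Zsqrtd 3)^n).im⟩ : Zsqrtd 3)
      from by ext <;> simp [Zsqrtd.re_sub, Zsqrtd.im_sub, Zsqrtd.re_intCast, Zsqrtd.im_intCast],
      mem_Ik]
    exact ⟨dvd_zero _, by rwa [dvd_neg]⟩

end main


end Stmt8

open Stmt8 Zsqrtd

/-- For every `k ≥ 1`, let `W_k ≤ (ℤ[√3]/(√3)^k)ˣ` be the subgroup of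
classes of norms `N(x)` of elements `x ∈ ℤ[√3]` that are units modulo `(√3)^k`.  Then the
quotient `(ℤ[√3]/(√3)^k)ˣ / W_k` is cyclic of order `2·3^⌊k/2⌋`, generated by the class
of `√3 - 1`. -/
theorem stmt_8 (k : ℕ) (hk : 1 ≤ k)
    (W : Subgroup (Sqrt3Quot k)ˣ)
    (hW : ∀ u : (Sqrt3Quot k)ˣ, u ∈ W ↔ ∃ x : Zsqrtd 3,
      IsUnit (Ideal.Quotient.mk (Ideal.span {(Zsqrtd.sqrtd : Zsqrtd 3) ^ k}) x) ∧
      ((Zsqrtd.norm x : Sqrt3Quot k) = (u : Sqrt3Quot k))) :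
    Nat.card ((Sqrt3Quot k)ˣ ⧸ W) = 2 * 3 ^ (k / 2) ∧
    ∃ g : (Sqrt3Quot k)ˣ,
      (g : Sqrt3Quot k) =
        Ideal.Quotient.mk (Ideal.span {(Zsqrtd.sqrtd : Zsqrtd 3) ^ k}) (Zsqrtd.sqrtd - 1) ∧
      Subgroup.zpowers (QuotientGroup.mk g : (Sqrt3Quot k)ˣ ⧸ W) = ⊤ := by
  -- the unit g
  have h2 : qmk k (sqrtd - 1) * qmk k (sqrtd + 1) = ((2:ℤ) : Rk k) := by
    have hz : (sqrtd - 1 : Zsqrtd 3) * (sqrtd + 1) = ((2:ℤ) : Zsqrtd 3) := by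
      ext <;> simp [Zsqrtd.re_mul, Zsqrtd.im_mul, Zsqrtd.re_sub, Zsqrtd.im_sub, Zsqrtd.re_add,
        Zsqrtd.im_add, Zsqrtd.re_sqrtd, Zsqrtd.im_sqrtd, Zsqrtd.re_intCast, Zsqrtd.im_intCast]
    rw [← map_mul, hz, ← intCast_mk]
  have hu : IsUnit (qmk k (sqrtd - 1)) := by
    have h2u : IsUnit ((2:ℤ) : Rk k) := isUnit_intCast k (by norm_num)
    rw [← h2] at h2u
    exact isUnit_of_mul_isUnit_left h2u
  have hg : ((hu.unit : (Rk k)ˣ) : Rk k) = qmk k (sqrtd - 1) := hu.unit_spec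
  set g : (Rk k)ˣ := hu.unit with hgdef
  -- cardinality of the quotient
  have hcardU := card_units k hk
  have hcardW := card_W k hk W hW
  have hcardQ : Nat.card ((Rk k)ˣ ⧸ W) = 2 * 3^(k/2) := by
    have h1 := Subgroup.card_eq_card_quotient_mul_card_subgroup W
    rw [hcardU, hcardW] at h1
    have hsplit : (3:ℕ)^(k-1) = 3^(k/2) * 3^(k - k/2 - 1) := by
      rw [← pow_add]
      congr 1
      omega
    have hpos : 0 < (3:ℕ)^(k - k/2 - 1) := by positivity
    have h3 : (2 * 3^(k/2)) * 3^(k - k/2 - 1)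
        = Nat.card ((Rk k)ˣ ⧸ W) * 3^(k - k/2 - 1) := by
      rw [← h1, hsplit]
      ring
    exact (Nat.eq_of_mul_eq_mul_right hpos h3).symm
  set gq : ((Rk k)ˣ ⧸ W) := (QuotientGroup.mk g) with hgq
  have key : ∀ n : ℕ, (gq^n = 1 ↔ g^n ∈ W) := by
    intro n
    have h := map_pow (QuotientGroup.mk' W) g n
    rw [hgq, show (QuotientGroup.mk g : ((Rk k)ˣ ⧸ W)) = QuotientGroup.mk' W g from rfl, ← h]
    exact QuotientGroup.eq_one_iff _
  have crit := gpow_mem_W_iff k hk W hW g hg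
  have mem1 : g^(2*3^(k/2)) ∈ W := by
    rw [crit]
    obtain ⟨A, b, hX, hA, hb, -⟩ := big (k/2)
    rw [pow_mul, hX]
    exact ⟨hA, ⟨b, rfl⟩⟩
  have mem2 : ¬ g^(3^(k/2)) ∈ W := by
    rw [crit]
    rintro ⟨h1, -⟩
    have hre := g_re_pow (3^(k/2))
    have hodd : Odd ((3:ℕ)^(k/2)) := Odd.pow ⟨1, rfl⟩
    rw [hodd.neg_one_pow] at hre
    have h3 := (hre.symm.trans h1).dvd
    omega
  have mem3 : 1 ≤ k/2 → ¬ g^(2*3^(k/2 - 1)) ∈ W := by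
    intro hf h
    rw [crit] at h
    obtain ⟨-, him⟩ := h
    obtain ⟨A, b, hX, -, hb, -⟩ := big (k/2 - 1)
    rw [pow_mul, hX] at him
    have h3 : (3:ℤ)^(k/2) = 3^(k/2-1) * 3 := by
      rw [← pow_succ]
      congr 1
      omega
    rw [h3] at him
    obtain ⟨t, ht⟩ := him
    have hpow : ((3:ℤ)^(k/2 - 1)) ≠ 0 := by positivity
    have hbt : b = 3 * t := by
      apply mul_left_cancel₀ hpow
      calc (3:ℤ)^(k/2-1) * b = (⟨A, 3^(k/2-1) * b⟩ : Zsqrtd 3).im := rfl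
        _ = 3^(k/2-1) * 3 * t := ht
        _ = 3^(k/2-1) * (3 * t) := by ring
    exact hb ⟨t, hbt⟩
  have hdvd : orderOf gq ∣ 2*3^(k/2) := orderOf_dvd_of_pow_eq_one ((key _).mpr mem1)
  have horder : orderOf gq = 2*3^(k/2) := by
    by_cases h2d : 2 ∣ orderOf gq
    · obtain ⟨o, ho⟩ := h2d
      have ho' : o ∣ 3^(k/2) := by
        have hh : 2*o ∣ 2*3^(k/2) := ho ▸ hdvd
        exact (Nat.mul_dvd_mul_iff_left (by norm_num : 0 < 2)).mp hh
      obtain ⟨c, hc, hoc⟩ := (Nat.dvd_prime_pow (by norm_num : Nat.Prime 3)).mp ho'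
      rcases Nat.lt_or_ge c (k/2) with hlt | hge
      · exfalso
        have hf1 : 1 ≤ k/2 := by omega
        apply mem3 hf1
        apply (key _).mp
        refine orderOf_dvd_iff_pow_eq_one.mp ?_
        rw [ho, hoc]
        exact mul_dvd_mul_left 2 (pow_dvd_pow 3 (by omega))
      · have hcf : c = k/2 := le_antisymm hc hge
        rw [ho, hoc, hcf]
    · exfalso
      have hcop : Nat.Coprime (orderOf gq) 2 :=
        Nat.coprime_comm.mp ((Nat.prime_two.coprime_iff_not_dvd).mpr h2d)
      have hdvd' : orderOf gq ∣ 3^(k/2) * 2 := by rwa [mul_comm] at hdvd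
      have h3 : orderOf gq ∣ 3^(k/2) := Nat.Coprime.dvd_of_dvd_mul_right hcop hdvd'
      exact mem2 ((key _).mp (orderOf_dvd_iff_pow_eq_one.mp h3))
  refine ⟨hcardQ, g, hg, ?_⟩
  apply Subgroup.eq_top_of_card_eq
  rw [Nat.card_zpowers, horder, hcardQ]
end

section
/- Let k ≥ 3 be an integer and let U_k ≤ (ℤ/2^{⌈k/2⌉}ℤ)^× be the subgroup { N(x) mod 2^{⌈k/2⌉} : x ∈ ℤ[i] whose class modulo (1+i)^k is a unit }. Then the quotient group (ℤ/2^{⌈k/2⌉}ℤ)^× / U_k has order 2 and is generated by the class of −1; in particular, −1 mod 2^{⌈k/2⌉} does not lie in U_k. -/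
open Zsqrtd

lemma lift_sq_sum : ∀ m, 3 ≤ m → ∀ n : ℕ, n % 8 = 1 ∨ n % 8 = 5 →
    ∃ a b : ℤ, a % 2 = 1 ∧ b % 2 = 0 ∧ (2 ^ m : ℤ) ∣ a ^ 2 + b ^ 2 - n := by
  intro m hm
  induction m, hm using Nat.le_induction with
  | base =>
    intro n hn
    rcases hn with h | h
    · exact ⟨1, 0, by norm_num, by norm_num, by norm_num; omega⟩
    · exact ⟨1, 2, by norm_num, by norm_num, by norm_num; omega⟩
  | succ m hm ih =>
    intro n hn
    obtain ⟨a, b, ha, hb, t, ht⟩ := ih n hn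
    rcases Int.even_or_odd t with ⟨s, hs⟩ | ⟨s, hs⟩
    · exact ⟨a, b, ha, hb, s, by rw [ht, hs]; ring⟩
    · obtain ⟨e, rfl⟩ : ∃ e, m = e + 3 := ⟨m - 3, by omega⟩
      obtain ⟨a', ha'⟩ : ∃ a', a = 2 * a' + 1 := ⟨(a-1)/2, by omega⟩
      have hs' : t = 2 * s + 1 := by omega
      obtain ⟨c, hc⟩ : (2:ℤ) ∣ 2 ^ (e + 2) := dvd_pow_self 2 (by omega)
      refine ⟨a + 2 ^ (e + 2), b, by omega, hb, s + a' + 1 + 2 ^ e, ?_⟩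
      have ht' : a ^ 2 + b ^ 2 - (n:ℤ) = 2 ^ (e + 3) * t := ht
      linear_combination ht' + 2 ^ (e+3) * hs' + 2 ^ (e+3) * ha'


lemma isUnit_mk_of_odd_norm (k : ℕ) (x : GaussianInt) (h : Odd (Zsqrtd.norm x)) :
    IsUnit (Ideal.Quotient.mk (Ideal.span {(1 + Zsqrtd.sqrtd : GaussianInt) ^ k}) x) := by
  obtain ⟨q, hq⟩ := h
  have hcop : IsCoprime (Zsqrtd.norm x) ((2:ℤ) ^ k) :=
    IsCoprime.pow_right (⟨1, -q, by linarith⟩ : IsCoprime (Zsqrtd.norm x) 2)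
  obtain ⟨c, d, hcd⟩ := hcop
  set I := Ideal.span {(1 + Zsqrtd.sqrtd : GaussianInt) ^ k} with hI
  have hsq : (1 + sqrtd : GaussianInt) ^ 2 = 2 * sqrtd := by
    have : (sqrtd : GaussianInt) * sqrtd = -1 := by
      ext <;> simp [Zsqrtd.re_mul, Zsqrtd.im_mul]
    linear_combination this
  have h2k : ((2 : GaussianInt)) ^ k = (1 + sqrtd) ^ k * ((1 + sqrtd) ^ k * (-sqrtd) ^ k) := by
    have hmul : (sqrtd : GaussianInt) * sqrtd = -1 := by
      ext <;> simp [Zsqrtd.re_mul, Zsqrtd.im_mul]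
    have h2 : (2 * sqrtd : GaussianInt) * (-sqrtd) = 2 := by linear_combination (-2 : GaussianInt) * hmul
    rw [← mul_assoc, ← pow_add, show k + k = 2 * k from by ring, pow_mul, hsq, ← mul_pow, h2]
  have hmem : ((2 : GaussianInt)) ^ k ∈ I := by
    rw [hI, Ideal.mem_span_singleton]
    exact ⟨(1 + sqrtd) ^ k * (-sqrtd) ^ k, h2k⟩
  refine IsUnit.of_mul_eq_one (Ideal.Quotient.mk I ((c : GaussianInt) * star x)) ?_
  rw [← map_mul]
  have key : x * ((c : GaussianInt) * star x) = 1 - (d : GaussianInt) * 2 ^ k := by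
    calc x * ((c : GaussianInt) * star x) = (c : GaussianInt) * (x * star x) := by ring
    _ = ((c * Zsqrtd.norm x : ℤ) : GaussianInt) := by rw [← Zsqrtd.norm_eq_mul_conj]; push_cast; ring
    _ = ((1 - d * 2 ^ k : ℤ) : GaussianInt) := by rw [show c * Zsqrtd.norm x = 1 - d * 2 ^ k from by linarith]
    _ = 1 - (d : GaussianInt) * 2 ^ k := by push_cast; ring
  have hz : Ideal.Quotient.mk I ((2 : GaussianInt) ^ k) = 0 := Ideal.Quotient.eq_zero_iff_mem.mpr hmem
  rw [key, map_sub, map_one, map_mul, map_pow]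
  rw [map_pow] at hz
  rw [hz]
  ring



theorem stmt_aux (k m : ℕ) (hm2 : 2 ≤ m)
    (U : Subgroup (ZMod (2 ^ m))ˣ)
    (hU : ∀ v : (ZMod (2 ^ m))ˣ,
      v ∈ U ↔ ∃ x : GaussianInt,
        IsUnit (Ideal.Quotient.mk (Ideal.span {(1 + Zsqrtd.sqrtd : GaussianInt) ^ k}) x) ∧
        (Zsqrtd.norm x : ZMod (2 ^ m)) = (v : ZMod (2 ^ m))) :
    Nat.card ((ZMod (2 ^ m))ˣ ⧸ U) = 2 ∧
    Subgroup.zpowers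
      (QuotientGroup.mk (-1 : (ZMod (2 ^ m))ˣ) : (ZMod (2 ^ m))ˣ ⧸ U) = ⊤ ∧
    (-1 : (ZMod (2 ^ m))ˣ) ∉ U := by
  have h4 : (4 : ℕ) ∣ 2 ^ m := by
    refine ⟨2 ^ (m - 2), ?_⟩
    rw [show (4:ℕ) = 2 ^ 2 from rfl, ← pow_add]
    congr 1; omega
  set f : (ZMod (2 ^ m))ˣ →* (ZMod 4)ˣ := ZMod.unitsMap h4 with hf
  have hdec : ∀ A B c : ZMod 4, (A ^ 2 + B ^ 2) * c = 1 → A ^ 2 + B ^ 2 = 1 := by decide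
  -- U = ker f
  have hUker : U = f.ker := by
    ext v
    rw [hU, MonoidHom.mem_ker]
    constructor
    · rintro ⟨x, -, hx⟩
      have hcoe : (f v : ZMod 4) = ((Zsqrtd.norm x : ℤ) : ZMod 4) := by
        rw [hf, ZMod.unitsMap_def, Units.coe_map, ← hx]
        exact map_intCast (ZMod.castHom h4 (ZMod 4)) _
      have hsum : (f v : ZMod 4) = ((x.re : ZMod 4)) ^ 2 + ((x.im : ZMod 4)) ^ 2 := by
        rw [hcoe]
        have : Zsqrtd.norm x = x.re ^ 2 + x.im ^ 2 := by
          simp [Zsqrtd.norm]; ring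
        rw [this]; push_cast; ring
      have h1 : (f v : ZMod 4) = 1 := by
        rw [hsum]
        exact hdec _ _ ((f v)⁻¹ : (ZMod 4)ˣ) (by rw [← hsum]; exact (f v).mul_inv)
      exact Units.ext h1
    · intro hv
      set n : ℕ := (v : ZMod (2 ^ m)).val with hn
      have hn4 : (n : ZMod 4) = 1 := by
        have : (f v : ZMod 4) = 1 := by rw [hv]; rfl
        rw [hf, ZMod.unitsMap_def, Units.coe_map] at this
        rwa [ZMod.natCast_val, ← ZMod.castHom_apply (h := h4)]
      have hn4' : n % 4 = 1 := by
        have := (ZMod.natCast_eq_natCast_iff n 1 4).mp (by rw [hn4]; norm_num)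
        simpa [Nat.ModEq] using this
      have hn8 : n % 8 = 1 ∨ n % 8 = 5 := by omega
      obtain ⟨a, b, ha, hb, hdvd⟩ := lift_sq_sum (max m 3) (le_max_right _ _) n hn8
      have hdvd' : (2 ^ m : ℤ) ∣ a ^ 2 + b ^ 2 - n :=
        dvd_trans (pow_dvd_pow 2 (le_max_left m 3)) hdvd
      refine ⟨⟨a, b⟩, ?_, ?_⟩
      · apply isUnit_mk_of_odd_norm
        obtain ⟨p, hp⟩ : ∃ p, a = 2 * p + 1 := ⟨(a-1)/2, by omega⟩
        obtain ⟨q, hq⟩ : ∃ q, b = 2 * q := ⟨b/2, by omega⟩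
        refine ⟨2 * p ^ 2 + 2 * p + 2 * q ^ 2, ?_⟩
        have : Zsqrtd.norm (⟨a, b⟩ : GaussianInt) = a ^ 2 + b ^ 2 := by
          simp [Zsqrtd.norm]; ring
        rw [this, hp, hq]; ring
      · have hnorm : Zsqrtd.norm (⟨a, b⟩ : GaussianInt) = a ^ 2 + b ^ 2 := by
          simp [Zsqrtd.norm]; ring
        rw [hnorm]
        have h0 : ((a ^ 2 + b ^ 2 - n : ℤ) : ZMod (2 ^ m)) = 0 := by
          rw [ZMod.intCast_zmod_eq_zero_iff_dvd]
          exact_mod_cast hdvd'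
        have heq : ((a ^ 2 + b ^ 2 : ℤ) : ZMod (2 ^ m)) = (n : ZMod (2 ^ m)) := by
          push_cast at h0 ⊢
          exact sub_eq_zero.mp h0
        rw [heq, hn, ZMod.natCast_val, ZMod.cast_id]
  have hsurj : Function.Surjective f := ZMod.unitsMap_surjective h4
  have hcard4 : Nat.card (ZMod 4)ˣ = 2 := by
    rw [Nat.card_eq_fintype_card, ZMod.card_units_eq_totient]
    decide
  have hcardQ : Nat.card ((ZMod (2 ^ m))ˣ ⧸ U) = 2 := by
    rw [← Subgroup.index_eq_card, hUker, Subgroup.index_ker,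
      MonoidHom.range_eq_top.mpr hsurj, Subgroup.card_top, hcard4]
  have hnotmem : (-1 : (ZMod (2 ^ m))ˣ) ∉ U := by
    rw [hUker, MonoidHom.mem_ker]
    intro h
    have h' := congrArg Units.val h
    rw [hf, ZMod.unitsMap_def, Units.coe_map] at h'
    simp only [Units.val_neg, Units.val_one, MonoidHom.coe_coe, map_neg, map_one] at h'
    exact absurd h' (by decide)
  refine ⟨hcardQ, ?_, hnotmem⟩
  have : Finite ((ZMod (2 ^ m))ˣ ⧸ U) :=
    Nat.finite_of_card_ne_zero (by rw [hcardQ]; norm_num)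
  set x : (ZMod (2 ^ m))ˣ ⧸ U := QuotientGroup.mk (-1) with hx
  have hx1 : x ≠ 1 := by
    rw [hx, Ne, QuotientGroup.eq_one_iff]
    exact hnotmem
  have hord : orderOf x = 2 := by
    have hdvd : orderOf x ∣ 2 := by
      have h := orderOf_dvd_natCard x
      rwa [hcardQ] at h
    rcases (Nat.prime_two.eq_one_or_self_of_dvd _ hdvd) with h1 | h2
    · exact absurd (orderOf_eq_one_iff.mp h1) hx1
    · exact h2
  apply Subgroup.eq_top_of_card_eq
  rw [Nat.card_zpowers, hord, hcardQ]


/-- For `k ≥ 3`, let `U_k ≤ (ℤ/2^⌈k/2⌉ℤ)ˣ` be the subgroup of norms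
`N(x) mod 2^⌈k/2⌉` of elements `x ∈ ℤ[i]` that are units modulo `(1+i)^k`.  Then the
quotient `(ℤ/2^⌈k/2⌉ℤ)ˣ / U_k` has order 2 and is generated by the class of `-1`;
in particular `-1 ∉ U_k`. -/
theorem stmt_14 (k : ℕ) (hk : 3 ≤ k)
    (U : Subgroup (ZMod (2 ^ ((k + 1) / 2)))ˣ)
    (hU : ∀ v : (ZMod (2 ^ ((k + 1) / 2)))ˣ,
      v ∈ U ↔ ∃ x : GaussianInt,
        IsUnit (Ideal.Quotient.mk (Ideal.span {(1 + Zsqrtd.sqrtd : GaussianInt) ^ k}) x) ∧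
        (Zsqrtd.norm x : ZMod (2 ^ ((k + 1) / 2))) = (v : ZMod (2 ^ ((k + 1) / 2)))) :
    Nat.card ((ZMod (2 ^ ((k + 1) / 2)))ˣ ⧸ U) = 2 ∧
    Subgroup.zpowers
      (QuotientGroup.mk (-1 : (ZMod (2 ^ ((k + 1) / 2)))ˣ) :
        (ZMod (2 ^ ((k + 1) / 2)))ˣ ⧸ U) = ⊤ ∧
    (-1 : (ZMod (2 ^ ((k + 1) / 2)))ˣ) ∉ U := by
  exact stmt_aux k ((k + 1) / 2) (by omega) U hU
end
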